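/- arXiv:2106.15763 — 7 statements merged into one kernel-verified Lean document; each statement's English description precedes it below -/
import Mathlib

section
/- If γ : [a,b] → X is a Lipschitz curve into a metric space, then for almost every t ∈ [a,b) the derivative of the arc-length function equals the metric speed: lim_{h→0⁺} ℓ(γ|_{[t,t+h]})/h = lim_{h→0⁺} d(γ(t+h),γ(t))/h, and both limits exist for almost every t. -/
open Set Filter MeasureTheory

lemma aux_abs_deriv_le {f : ℝ → ℝ} {K : NNReal} (hf : LipschitzWith K f) (t : ℝ) :
    |deriv f t| ≤ K := by
  by_cases h : DifferentiableAt ℝ f t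
  · have h1 := h.hasDerivAt
    rw [hasDerivAt_iff_tendsto_slope] at h1
    have h2 : Tendsto (fun y => |slope f t y|) (nhdsWithin t {t}ᶜ) (nhds |deriv f t|) := h1.abs
    refine le_of_tendsto h2 ?_
    filter_upwards [self_mem_nhdsWithin] with y hy
    have hyt : y - t ≠ 0 := sub_ne_zero.2 hy
    rw [slope_def_field, abs_div, div_le_iff₀ (abs_sub_pos.2 hy)]
    have := hf.dist_le_mul y t
    simpa [Real.dist_eq] using this
  · simp [deriv_zero_of_not_differentiableAt h, K.coe_nonneg]

lemma aux_intInt {f : ℝ → ℝ} (hm : Measurable f) {C : ℝ} (hC : ∀ t, |f t| ≤ C)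
    (u v : ℝ) : IntervalIntegrable f volume u v := by
  have : ∀ p q : ℝ, IntegrableOn f (Ioc p q) volume := by
    intro p q
    refine ⟨hm.aestronglyMeasurable, HasFiniteIntegral.of_bounded (C := C) ?_⟩
    exact ae_of_all _ fun t => by simpa [Real.norm_eq_abs] using hC t
  exact ⟨this u v, this v u⟩

lemma aux_stieltjes_eq {m : ℝ → ℝ} (hm : Monotone m) (hc : Continuous m) (x : ℝ) :
    hm.stieltjesFunction x = m x := by
  rw [hm.stieltjesFunction_eq]
  refine rightLim_eq_of_tendsto (h := ?_) ?_
  · exact nhdsGT_neBot x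
  · exact (hc.tendsto x).mono_left nhdsWithin_le_nhds

lemma aux_mono_integral_deriv_le {m : ℝ → ℝ} (hm : Monotone m) (hc : Continuous m)
    {u v : ℝ} (huv : u ≤ v) : ∫ t in u..v, deriv m t ≤ m v - m u := by
  set μ := hm.stieltjesFunction.measure with hμ
  have hd : deriv m =ᵐ[volume] fun x => (μ.rnDeriv volume x).toReal := by
    filter_upwards [hm.ae_hasDerivAt] with x hx using hx.deriv
  have hfin : μ (Ioc u v) ≠ ⊤ := by
    simp [hμ, StieltjesFunction.measure_Ioc]
  rw [intervalIntegral.integral_of_le huv]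
  calc ∫ t in Ioc u v, deriv m t
      = ∫ t in Ioc u v, (μ.rnDeriv volume t).toReal := by
        exact integral_congr_ae (ae_restrict_of_ae hd)
    _ ≤ (μ (Ioc u v)).toReal := Measure.setIntegral_toReal_rnDeriv_le hfin
    _ = m v - m u := by
        rw [hμ, StieltjesFunction.measure_Ioc, aux_stieltjes_eq hm hc,
          aux_stieltjes_eq hm hc, ENNReal.toReal_ofReal (by linarith [hm huv])]

lemma aux_lip_mono {f : ℝ → ℝ} {K : NNReal} (hf : LipschitzWith K f) :
    Monotone (fun t => (K : ℝ) * t - f t) := by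
  intro s t hst
  have h1 := hf.dist_le_mul t s
  rw [Real.dist_eq, Real.dist_eq] at h1
  have h2 := le_abs_self (f t - f s)
  have h3 : |t - s| = t - s := abs_of_nonneg (by linarith)
  simp only
  rw [h3, mul_sub] at h1
  linarith [h1, h2]

lemma aux_lip_ae_deriv {f : ℝ → ℝ} {K : NNReal} (hf : LipschitzWith K f) :
    ∀ᵐ t, HasDerivAt f (deriv f t) t := by
  have hmono := aux_lip_mono hf
  filter_upwards [hmono.ae_hasDerivAt] with t ht
  set d := (hmono.stieltjesFunction.measure.rnDeriv volume t).toReal with hd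
  have h2 : HasDerivAt (fun y => (K : ℝ) * y - ((K : ℝ) * y - f y)) ((K : ℝ) * 1 - d) t :=
    ((hasDerivAt_id t).const_mul (K : ℝ)).sub ht
  have hfe : (fun y => (K : ℝ) * y - ((K : ℝ) * y - f y)) = f := by funext y; ring
  rw [hfe] at h2
  rw [h2.deriv]; exact h2

lemma aux_lip_sub_le_integral {f : ℝ → ℝ} {K : NNReal} (hf : LipschitzWith K f) {u v : ℝ}
    (huv : u ≤ v) : f v - f u ≤ ∫ t in u..v, deriv f t := by
  set m : ℝ → ℝ := fun t => (K : ℝ) * t - f t with hm_def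
  have hmono : Monotone m := aux_lip_mono hf
  have hcont : Continuous m := (continuous_const.mul continuous_id).sub hf.continuous
  have hm_lip : LipschitzWith (K + K) m := by
    apply LipschitzWith.of_dist_le_mul
    intro s t
    have h1 := hf.dist_le_mul s t
    rw [Real.dist_eq, Real.dist_eq] at h1 ⊢
    push_cast
    calc |m s - m t| = |(K : ℝ) * (s - t) - (f s - f t)| := by simp only [m]; ring_nf
      _ ≤ |(K : ℝ) * (s - t)| + |f s - f t| := abs_sub _ _
      _ ≤ (K : ℝ) * |s - t| + (K : ℝ) * |s - t| := by
          refine add_le_add ?_ h1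
          rw [abs_mul, abs_of_nonneg (K.coe_nonneg)]
      _ = ((K : ℝ) + K) * |s - t| := by ring
  have key : deriv f =ᵐ[volume] fun t => (K : ℝ) - deriv m t := by
    filter_upwards [aux_lip_ae_deriv hf] with t ht
    have h2 : HasDerivAt m ((K : ℝ) * 1 - deriv f t) t :=
      ((hasDerivAt_id t).const_mul (K : ℝ)).sub ht
    rw [h2.deriv]; ring
  have hint_m : IntervalIntegrable (deriv m) volume u v :=
    aux_intInt (measurable_deriv m) (fun t => aux_abs_deriv_le hm_lip t) u v
  have h4 : ∫ t in u..v, deriv f t = ∫ t in u..v, ((K : ℝ) - deriv m t) := by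
    refine intervalIntegral.integral_congr_ae ?_
    filter_upwards [key] with t ht _ using ht
  rw [h4, intervalIntegral.integral_sub (intervalIntegrable_const) hint_m,
    intervalIntegral.integral_const]
  have h5 := aux_mono_integral_deriv_le hmono hcont huv
  have h6 : m v - m u = (K : ℝ) * (v - u) - (f v - f u) := by simp only [m]; ring
  rw [smul_eq_mul]
  linarith [h5, h6]

lemma aux_evar_le {X : Type*} [MetricSpace X] (δ : ℝ → X) {u v : ℝ} (huv : u ≤ v) (I : ℝ → ℝ)
    (hI : ∀ p q, u ≤ p → p ≤ q → q ≤ v → dist (δ q) (δ p) ≤ I q - I p) :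
    eVariationOn δ (Icc u v) ≤ ENNReal.ofReal (I v - I u) := by
  refine iSup_le ?_
  rintro ⟨n, w, hw, hws⟩
  have hterm : ∀ i, dist (δ (w (i + 1))) (δ (w i)) ≤ I (w (i + 1)) - I (w i) := fun i =>
    hI _ _ (hws i).1 (hw (Nat.le_succ i)) (hws (i + 1)).2
  calc ∑ i ∈ Finset.range n, edist (δ (w (i + 1))) (δ (w i))
      = ∑ i ∈ Finset.range n, ENNReal.ofReal (dist (δ (w (i + 1))) (δ (w i))) := by
        simp [edist_dist]
    _ = ENNReal.ofReal (∑ i ∈ Finset.range n, dist (δ (w (i + 1))) (δ (w i))) :=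
        (ENNReal.ofReal_sum_of_nonneg fun i _ => dist_nonneg).symm
    _ ≤ ENNReal.ofReal (I v - I u) := by
        refine ENNReal.ofReal_le_ofReal ?_
        have h1 : ∑ i ∈ Finset.range n, dist (δ (w (i + 1))) (δ (w i))
            ≤ ∑ i ∈ Finset.range n, (I (w (i + 1)) - I (w i)) :=
          Finset.sum_le_sum fun i _ => hterm i
        rw [Finset.sum_range_sub (fun i => I (w i))] at h1
        have h2 : 0 ≤ I (w 0) - I u := le_trans dist_nonneg (hI u (w 0) le_rfl (hws 0).1 (hws 0).2)
        have h3 : 0 ≤ I v - I (w n) := le_trans dist_nonneg (hI (w n) v (hws n).1 (hws n).2 le_rfl)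
        linarith

lemma aux_tendsto_right {f : ℝ → ℝ} {t v : ℝ} (hf : HasDerivAt f v t) :
    Tendsto (fun h => (f (t + h) - f t) / h) (nhdsWithin 0 (Ioi 0)) (nhds v) := by
  rw [hasDerivAt_iff_tendsto_slope] at hf
  have hmap : Tendsto (fun h : ℝ => t + h) (nhdsWithin 0 (Ioi 0)) (nhdsWithin t {t}ᶜ) := by
    refine tendsto_nhdsWithin_of_tendsto_nhds_of_eventually_within _ ?_ ?_
    · have : Tendsto (fun h : ℝ => t + h) (nhds 0) (nhds (t + 0)) :=
        tendsto_const_nhds.add tendsto_id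
      simpa using this.mono_left nhdsWithin_le_nhds
    · filter_upwards [self_mem_nhdsWithin] with h (hh : (0:ℝ) < h)
      simp [hh.ne']
  have h2 := hf.comp hmap
  refine h2.congr fun h => ?_
  simp [Function.comp, slope_def_field]
lemma aux_G_deriv {g : ℝ → ℝ} (hgm : Measurable g) (hg0 : ∀ t, 0 ≤ g t) {C : ℝ}
    (hgC : ∀ t, g t ≤ C) :
    ∀ᵐ t, HasDerivAt (fun x => ∫ s in (0:ℝ)..x, g s) (g t) t := by
  have habs : ∀ t, |g t| ≤ C := fun t => by rw [abs_of_nonneg (hg0 t)]; exact hgC t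
  have gInt : ∀ u v : ℝ, IntervalIntegrable g volume u v := aux_intInt hgm habs
  set G : ℝ → ℝ := fun x => ∫ s in (0:ℝ)..x, g s with hGdef
  have hGsub : ∀ u v : ℝ, G v - G u = ∫ s in u..v, g s := by
    intro u v
    have := intervalIntegral.integral_add_adjacent_intervals (gInt 0 u) (gInt u v)
    simp only [hGdef]
    linarith [this]
  have hGmono : Monotone G := by
    intro u v huv
    have h1 : 0 ≤ ∫ s in u..v, g s :=
      intervalIntegral.integral_nonneg huv fun s _ => hg0 s
    have := hGsub u v; linarith
  have hGcont : Continuous G := by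
    have hC0 : 0 ≤ C := le_trans (hg0 0) (hgC 0)
    refine LipschitzWith.continuous (K := ⟨C, hC0⟩) ?_
    refine LipschitzWith.of_dist_le_mul fun u v => ?_
    rw [Real.dist_eq, hGsub v u]
    have h1 : ‖∫ s in v..u, g s‖ ≤ C * |u - v| := by
      refine intervalIntegral.norm_integral_le_of_norm_le_const fun s _ => ?_
      rw [Real.norm_eq_abs]; exact habs s
    rwa [Real.norm_eq_abs] at h1
  have hμG : hGmono.stieltjesFunction.measure
      = volume.withDensity (fun t => ENNReal.ofReal (g t)) := by
    refine Measure.ext_of_Ioc _ _ fun p q hpq => ?_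
    rw [StieltjesFunction.measure_Ioc, aux_stieltjes_eq hGmono hGcont,
      aux_stieltjes_eq hGmono hGcont, withDensity_apply _ measurableSet_Ioc]
    rw [hGsub p q, intervalIntegral.integral_of_le hpq.le]
    rw [← ofReal_integral_eq_lintegral_ofReal ((gInt p q).1) (ae_of_all _ fun t => hg0 t)]
  have hrn : hGmono.stieltjesFunction.measure.rnDeriv volume
      =ᵐ[volume] fun t => ENNReal.ofReal (g t) := by
    rw [hμG]
    exact Measure.rnDeriv_withDensity volume hgm.ennreal_ofReal
  filter_upwards [hGmono.ae_hasDerivAt, hrn] with t h1 h2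
  rw [h2, ENNReal.toReal_ofReal (hg0 t)] at h1
  exact h1


/-- For a Lipschitz curve `γ : [a,b] → X`, for almost every `t ∈ [a,b)` the metric
speed exists and equals the derivative of the arc-length function:
`lim_{h→0⁺} ℓ(γ|_[t,t+h])/h = lim_{h→0⁺} d(γ(t+h),γ(t))/h`. -/
theorem stmt_4 {X : Type*} [MetricSpace X] (a b : ℝ) (L : NNReal) (γ : ℝ → X)
    (hγ : LipschitzOnWith L γ (Icc a b)) :
    ∀ᵐ t ∂(volume.restrict (Ico a b)),
      ∃ v : ℝ,
        Tendsto (fun h : ℝ => dist (γ (t + h)) (γ t) / h) (nhdsWithin 0 (Ioi 0)) (nhds v) ∧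
        Tendsto (fun h : ℝ => (eVariationOn γ (Icc t (t + h))).toReal / h)
          (nhdsWithin 0 (Ioi 0)) (nhds v) := by
  rcases le_or_gt b a with hba | hab
  · rw [Ico_eq_empty (not_lt.mpr hba), Measure.restrict_empty]
    simp
  -- projection onto [a, b] and the extended curve δ
  set c : ℝ → ℝ := fun t => (projIcc a b hab.le t : ℝ) with hcdef
  have hc1 : LipschitzWith 1 c := by
    refine LipschitzWith.of_dist_le_mul fun s t => ?_
    have h1 := (LipschitzWith.projIcc (a := a) (b := b) hab.le).dist_le_mul s t
    rw [Subtype.dist_eq] at h1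
    simpa using h1
  have hcmem : ∀ t, c t ∈ Icc a b := fun t => (projIcc a b hab.le t).2
  have hceq : ∀ t ∈ Icc a b, c t = t := fun t ht => by
    simp [hcdef, projIcc_of_mem hab.le ht]
  set δ : ℝ → X := fun t => γ (c t) with hδdef
  have hδL : LipschitzWith L δ := by
    refine LipschitzWith.of_dist_le_mul fun s t => ?_
    calc dist (δ s) (δ t) ≤ L * dist (c s) (c t) :=
          (lipschitzOnWith_iff_dist_le_mul.mp hγ) (c s) (hcmem s) (c t) (hcmem t)
      _ ≤ L * dist s t := by
          have h2 := hc1.dist_le_mul s t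
          rw [NNReal.coe_one, one_mul] at h2
          exact mul_le_mul_of_nonneg_left h2 L.coe_nonneg
  have hδeq : EqOn γ δ (Icc a b) := fun t ht => by
    simp only [hδdef]; rw [hceq t ht]
  -- dense sequence in the image
  have hsep : TopologicalSpace.IsSeparable (range δ) := by
    rw [← image_univ]
    exact (TopologicalSpace.IsSeparable.of_separableSpace (univ : Set ℝ)).image hδL.continuous
  obtain ⟨T, hTc, hTsub⟩ := hsep
  have hTne : T.Nonempty := by
    by_contra h
    rw [not_nonempty_iff_eq_empty] at h
    have h1 : δ 0 ∈ closure T := hTsub ⟨0, rfl⟩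
    simp [h] at h1
  obtain ⟨e, hTe⟩ := Set.Countable.exists_eq_range hTc hTne
  have hdense : ∀ (p : ℝ) (ε : ℝ), 0 < ε → ∃ n, dist (δ p) (e n) < ε := by
    intro p ε hε
    have h1 : δ p ∈ closure T := hTsub ⟨p, rfl⟩
    rw [Metric.mem_closure_iff] at h1
    obtain ⟨y, hyT, hy⟩ := h1 ε hε
    rw [hTe] at hyT
    obtain ⟨n, rfl⟩ := hyT
    exact ⟨n, hy⟩
  -- the auxiliary distance functions and the sup of derivatives
  set φ : ℕ → ℝ → ℝ := fun n t => dist (δ t) (e n) with hφdef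
  have hφL : ∀ n, LipschitzWith L (φ n) := by
    intro n; refine LipschitzWith.of_dist_le_mul fun s t => ?_
    rw [Real.dist_eq]
    calc |φ n s - φ n t| ≤ dist (δ s) (δ t) := abs_dist_sub_le _ _ _
      _ ≤ L * dist s t := hδL.dist_le_mul s t
  set gE : ℝ → ENNReal := fun t => ⨆ n, ENNReal.ofReal |deriv (φ n) t| with hgEdef
  have hgE_le : ∀ t, gE t ≤ ENNReal.ofReal L :=
    fun t => iSup_le fun n => ENNReal.ofReal_le_ofReal (aux_abs_deriv_le (hφL n) t)
  set g : ℝ → ℝ := fun t => (gE t).toReal with hgdef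
  have hg0 : ∀ t, 0 ≤ g t := fun t => ENNReal.toReal_nonneg
  have hgC : ∀ t, g t ≤ L := fun t => ENNReal.toReal_le_of_le_ofReal L.coe_nonneg (hgE_le t)
  have hgEfin : ∀ t, gE t ≠ ⊤ := fun t => (lt_of_le_of_lt (hgE_le t) ENNReal.ofReal_lt_top).ne
  have habs_le_g : ∀ n t, |deriv (φ n) t| ≤ g t := by
    intro n t
    have h1 : ENNReal.ofReal |deriv (φ n) t| ≤ gE t :=
      le_iSup (fun n => ENNReal.ofReal |deriv (φ n) t|) n
    have h2 := ENNReal.toReal_mono (hgEfin t) h1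
    rwa [ENNReal.toReal_ofReal (abs_nonneg _)] at h2
  have hgmeas : Measurable g := by
    apply Measurable.ennreal_toReal
    exact Measurable.iSup fun n => ((measurable_deriv (φ n)).abs).ennreal_ofReal
  have hφInt : ∀ n, ∀ u v : ℝ, IntervalIntegrable (deriv (φ n)) volume u v :=
    fun n => aux_intInt (measurable_deriv (φ n)) (fun t => aux_abs_deriv_le (hφL n) t)
  have hgInt : ∀ u v : ℝ, IntervalIntegrable g volume u v :=
    aux_intInt hgmeas (fun t => by rw [abs_of_nonneg (hg0 t)]; exact hgC t)
  have hderiv_le_g : ∀ n, ∀ u v : ℝ, u ≤ v →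
      ∫ s in u..v, deriv (φ n) s ≤ ∫ s in u..v, g s := fun n u v huv =>
    intervalIntegral.integral_mono_on huv (hφInt n u v) (hgInt u v)
      fun s _ => le_trans (le_abs_self _) (habs_le_g n s)
  have hdist_int : ∀ p q : ℝ, p ≤ q → dist (δ q) (δ p) ≤ ∫ s in p..q, g s := by
    intro p q hpq
    refine le_of_forall_pos_le_add fun ε hε => ?_
    obtain ⟨n, hn⟩ := hdense p (ε / 2) (by positivity)
    have htri1 : dist (δ q) (δ p) ≤ dist (δ q) (e n) + dist (e n) (δ p) := dist_triangle _ _ _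
    have hcomm : dist (e n) (δ p) = dist (δ p) (e n) := dist_comm _ _
    have hφq : φ n q = dist (δ q) (e n) := rfl
    have hφp : φ n p = dist (δ p) (e n) := rfl
    have h3 : φ n q - φ n p ≤ ∫ s in p..q, g s :=
      le_trans (aux_lip_sub_le_integral (hφL n) hpq) (hderiv_le_g n p q hpq)
    linarith [htri1, hn, h3]
  -- the primitive G of g
  set G : ℝ → ℝ := fun x => ∫ s in (0:ℝ)..x, g s with hGdef
  have hGsub : ∀ u v : ℝ, G v - G u = ∫ s in u..v, g s := by
    intro u v
    have h1 := intervalIntegral.integral_add_adjacent_intervals (hgInt 0 u) (hgInt u v)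
    simp only [hGdef]
    linarith [h1]
  have hGd : ∀ᵐ t, HasDerivAt G (g t) t := aux_G_deriv hgmeas hg0 hgC
  -- the arc length function F
  have hlbv : LocallyBoundedVariationOn δ univ := hδL.locallyBoundedVariationOn univ
  set F : ℝ → ℝ := variationOnFromTo δ univ 0 with hFdef
  have hFmono : Monotone F := by
    have h1 := variationOnFromTo.monotoneOn hlbv (mem_univ 0)
    rwa [monotoneOn_univ] at h1
  have hFsub : ∀ p q : ℝ, p ≤ q → F q - F p = (eVariationOn δ (Icc p q)).toReal := by
    intro p q hpq
    have h1 := variationOnFromTo.add hlbv (mem_univ 0) (mem_univ p) (mem_univ q)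
    have h2 : variationOnFromTo δ univ p q = (eVariationOn δ (Icc p q)).toReal := by
      rw [variationOnFromTo.eq_of_le δ univ hpq, univ_inter]
    simp only [hFdef]
    linarith [h1, h2]
  have hevarL : ∀ p q : ℝ, p ≤ q → eVariationOn δ (Icc p q) ≤ ENNReal.ofReal (L * (q - p)) := by
    intro p q hpq
    have h1 : ∀ p' q', p ≤ p' → p' ≤ q' → q' ≤ q →
        dist (δ q') (δ p') ≤ (fun t => (L : ℝ) * t) q' - (fun t => (L : ℝ) * t) p' := by
      intro p' q' _ hpq' _
      have h2 := hδL.dist_le_mul q' p'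
      rw [Real.dist_eq, abs_of_nonneg (by linarith : (0:ℝ) ≤ q' - p')] at h2
      simp only
      linarith [h2, mul_sub (L : ℝ) q' p']
    have h2 := aux_evar_le δ hpq (fun t => (L : ℝ) * t) h1
    rwa [← mul_sub] at h2
  have hFlip : ∀ p q : ℝ, p ≤ q → F q - F p ≤ L * (q - p) := by
    intro p q hpq
    rw [hFsub p q hpq]
    have h1 := ENNReal.toReal_mono ENNReal.ofReal_ne_top (hevarL p q hpq)
    rwa [ENNReal.toReal_ofReal (mul_nonneg L.coe_nonneg (by linarith))] at h1
  have hdistF : ∀ p q : ℝ, p ≤ q → dist (δ q) (δ p) ≤ F q - F p := by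
    intro p q hpq
    rw [hFsub p q hpq, dist_edist]
    refine ENNReal.toReal_mono ?_ (eVariationOn.edist_le δ ⟨hpq, le_rfl⟩ ⟨le_rfl, hpq⟩)
    exact (lt_of_le_of_lt (hevarL p q hpq) ENNReal.ofReal_lt_top).ne
  have hFG : ∀ p q : ℝ, p ≤ q → F q - F p ≤ G q - G p := by
    intro p q hpq
    rw [hFsub p q hpq]
    have h1 : ∀ p' q', p ≤ p' → p' ≤ q' → q' ≤ q → dist (δ q') (δ p') ≤ G q' - G p' := by
      intro p' q' _ hpq' _
      rw [hGsub p' q']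
      exact hdist_int p' q' hpq'
    have h2 := ENNReal.toReal_mono ENNReal.ofReal_ne_top (aux_evar_le δ hpq G h1)
    have h3 : 0 ≤ G q - G p := by
      rw [hGsub p q]
      exact intervalIntegral.integral_nonneg hpq fun s _ => hg0 s
    rwa [ENNReal.toReal_ofReal h3] at h2
  have hφae : ∀ᵐ t, ∀ n, HasDerivAt (φ n) (deriv (φ n) t) t :=
    ae_all_iff.2 fun n => aux_lip_ae_deriv (hφL n)
  have hbig : ∀ᵐ t ∂(volume : Measure ℝ), (∃ w, HasDerivAt F w t) ∧ HasDerivAt G (g t) t ∧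
      ∀ n, HasDerivAt (φ n) (deriv (φ n) t) t := by
    filter_upwards [hFmono.ae_hasDerivAt, hGd, hφae] with t h1 h2 h3
    exact ⟨⟨_, h1⟩, h2, h3⟩
  filter_upwards [ae_restrict_mem measurableSet_Ico, ae_restrict_of_ae hbig] with t htmem hbt
  obtain ⟨⟨w, hF'⟩, hG', hφ'⟩ := hbt
  obtain ⟨hta, htb⟩ := htmem
  -- slope limits
  have tF := aux_tendsto_right hF'
  have tG := aux_tendsto_right hG'
  have tφ : ∀ n, Tendsto (fun h => (φ n (t + h) - φ n t) / h) (nhdsWithin 0 (Ioi 0))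
      (nhds (deriv (φ n) t)) := fun n => aux_tendsto_right (hφ' n)
  haveI hne : (nhdsWithin (0:ℝ) (Ioi 0)).NeBot := nhdsGT_neBot 0
  set l := nhdsWithin (0:ℝ) (Ioi 0) with hldef
  set D : ℝ → ℝ := fun h => dist (δ (t + h)) (δ t) / h with hDdef
  have hDF : ∀ᶠ h in l, D h ≤ (F (t + h) - F t) / h := by
    filter_upwards [self_mem_nhdsWithin] with h (hh : (0:ℝ) < h)
    have h1 := hdistF t (t + h) (by linarith)
    simp only [hDdef]
    gcongr
  have hD0 : ∀ᶠ h in l, 0 ≤ D h := by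
    filter_upwards [self_mem_nhdsWithin] with h (hh : (0:ℝ) < h)
    exact div_nonneg dist_nonneg hh.le
  have hDL : ∀ᶠ h in l, D h ≤ L := by
    filter_upwards [self_mem_nhdsWithin] with h (hh : (0:ℝ) < h)
    have h1 := hδL.dist_le_mul (t + h) t
    rw [Real.dist_eq, add_sub_cancel_left, abs_of_pos hh] at h1
    rw [hDdef]
    simp only
    rw [div_le_iff₀ hh]
    linarith [h1]
  have hbdd_le : IsBoundedUnder (· ≤ ·) l D := ⟨L, eventually_map.mpr hDL⟩
  have hbdd_ge : IsBoundedUnder (· ≥ ·) l D := ⟨0, eventually_map.mpr hD0⟩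
  have hcob_le : IsCoboundedUnder (· ≤ ·) l D := hbdd_ge.isCoboundedUnder_le
  have hcob_ge : IsCoboundedUnder (· ≥ ·) l D := hbdd_le.isCoboundedUnder_ge
  have hlimsup : limsup D l ≤ w := by
    have h1 : limsup (fun h => (F (t + h) - F t) / h) l = w := tF.limsup_eq
    rw [← h1]
    exact limsup_le_limsup hDF hcob_le tF.isBoundedUnder_le
  have hliminf_ge : ∀ n, |deriv (φ n) t| ≤ liminf D l := by
    intro n
    have h1 : Tendsto (fun h => |(φ n (t + h) - φ n t) / h|) l (nhds |deriv (φ n) t|) :=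
      (tφ n).abs
    have h2 : ∀ᶠ h in l, |(φ n (t + h) - φ n t) / h| ≤ D h := by
      filter_upwards [self_mem_nhdsWithin] with h (hh : (0:ℝ) < h)
      rw [abs_div, abs_of_pos hh]
      simp only [hDdef]
      gcongr
      exact abs_dist_sub_le _ _ _
    calc |deriv (φ n) t| = liminf (fun h => |(φ n (t + h) - φ n t) / h|) l := h1.liminf_eq.symm
      _ ≤ liminf D l := liminf_le_liminf h2 h1.isBoundedUnder_ge hcob_ge
  have hliminf0 : (0:ℝ) ≤ liminf D l := le_liminf_of_le hcob_ge hD0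
  have hgt_le : g t ≤ liminf D l := by
    have h1 : gE t ≤ ENNReal.ofReal (liminf D l) :=
      iSup_le fun n => ENNReal.ofReal_le_ofReal (hliminf_ge n)
    exact ENNReal.toReal_le_of_le_ofReal hliminf0 h1
  have hw_le : w ≤ g t := by
    refine le_of_tendsto_of_tendsto tF tG ?_
    filter_upwards [self_mem_nhdsWithin] with h (hh : (0:ℝ) < h)
    have h1 := hFG t (t + h) (by linarith)
    gcongr
  have hll : liminf D l ≤ limsup D l := liminf_le_limsup hbdd_le hbdd_ge
  have hinf : liminf D l = w := le_antisymm (hll.trans hlimsup) (hw_le.trans hgt_le)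
  have hsup : limsup D l = w := le_antisymm hlimsup ((hw_le.trans hgt_le).trans hll)
  have hDtend : Tendsto D l (nhds w) := tendsto_of_liminf_eq_limsup hinf hsup hbdd_le hbdd_ge
  have hev : ∀ᶠ h in l, 0 < h ∧ t + h ≤ b := by
    have h1 : Ioo (0:ℝ) (b - t) ∈ l := Ioo_mem_nhdsGT_of_mem ⟨le_rfl, by linarith⟩
    filter_upwards [h1] with h hh
    exact ⟨hh.1, by linarith [hh.2]⟩
  refine ⟨w, ?_, ?_⟩
  · refine hDtend.congr' ?_
    filter_upwards [hev] with h hh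
    obtain ⟨hh0, hhb⟩ := hh
    have h1 : t + h ∈ Icc a b := ⟨by linarith, hhb⟩
    have h2 : t ∈ Icc a b := ⟨hta, htb.le⟩
    simp only [hDdef]
    rw [← hδeq h1, ← hδeq h2]
  · refine tF.congr' ?_
    filter_upwards [hev] with h hh
    obtain ⟨hh0, hhb⟩ := hh
    have hsub : Icc t (t + h) ⊆ Icc a b := Icc_subset_Icc hta hhb
    have h1 : eVariationOn γ (Icc t (t + h)) = eVariationOn δ (Icc t (t + h)) :=
      eVariationOn.eq_of_eqOn (hδeq.mono hsub)
    rw [h1, ← hFsub t (t + h) (by linarith)]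
end

section
/- Let g : ℝᵐ → ℝⁿ be any map and f : ℝⁿ → ℝᴺ be Lipschitz. If both g and f∘g are differentiable at x ∈ ℝᵐ, then rank D(f∘g)(x) ≤ rank Dg(x). -/
/-- If `g : ℝᵐ → ℝⁿ` is any map, `f : ℝⁿ → ℝᴺ` is Lipschitz, and both `g` and `f ∘ g`
are differentiable at `x`, then `rank D(f∘g)(x) ≤ rank Dg(x)`. -/
theorem stmt_5 {m n N : ℕ} (g : EuclideanSpace ℝ (Fin m) → EuclideanSpace ℝ (Fin n))
    (f : EuclideanSpace ℝ (Fin n) → EuclideanSpace ℝ (Fin N))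
    (K : NNReal) (hf : LipschitzWith K f)
    (x : EuclideanSpace ℝ (Fin m))
    (g' : EuclideanSpace ℝ (Fin m) →L[ℝ] EuclideanSpace ℝ (Fin n))
    (D : EuclideanSpace ℝ (Fin m) →L[ℝ] EuclideanSpace ℝ (Fin N))
    (hg : HasFDerivAt g g' x) (hfg : HasFDerivAt (f ∘ g) D x) :
    Module.finrank ℝ (LinearMap.range D.toLinearMap) ≤
      Module.finrank ℝ (LinearMap.range g'.toLinearMap) := by
  have hker : LinearMap.ker g'.toLinearMap ≤ LinearMap.ker D.toLinearMap := by
    intro v hv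
    simp only [LinearMap.mem_ker, ContinuousLinearMap.coe_coe] at hv ⊢
    have hline : HasDerivAt (fun t : ℝ => x + t • v) v 0 := by
      simpa using ((hasDerivAt_id (0:ℝ)).smul_const v).const_add x
    have hg0 : HasFDerivAt g g' (x + (0:ℝ) • v) := by simpa using hg
    have hφ : HasDerivAt (fun t : ℝ => g (x + t • v)) (g' v) 0 := by
      have := hg0.comp_hasDerivAt (x := (0:ℝ)) (f := fun t : ℝ => x + t • v) (by simpa using hline)
      exact this
    rw [hv] at hφ
    have hfg0 : HasFDerivAt (f ∘ g) D (x + (0:ℝ) • v) := by simpa using hfg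
    have hψ : HasDerivAt (fun t : ℝ => (f ∘ g) (x + t • v)) (D v) 0 := by
      have := hfg0.comp_hasDerivAt (x := (0:ℝ)) (f := fun t : ℝ => x + t • v) (by simpa using hline)
      exact this
    have hφo : (fun t : ℝ => g (x + t • v) - g x) =o[nhds 0] (fun t : ℝ => t) := by
      have := hasDerivAt_iff_isLittleO.mp hφ
      simpa using this
    have hψo : (fun t : ℝ => (f ∘ g) (x + t • v) - (f ∘ g) x) =o[nhds 0] (fun t : ℝ => t) := by
      refine Asymptotics.IsBigO.trans_isLittleO ?_ hφo
      refine Asymptotics.isBigO_of_le' (c := (K:ℝ)) _ fun t => ?_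
      have := hf.dist_le_mul (g (x + t • v)) (g x)
      simpa [dist_eq_norm, Function.comp] using this
    have hψ0 : HasDerivAt (fun t : ℝ => (f ∘ g) (x + t • v)) 0 0 := by
      rw [hasDerivAt_iff_isLittleO]
      simpa using hψo
    exact hψ.unique hψ0
  have h1 := LinearMap.finrank_range_add_finrank_ker D.toLinearMap
  have h2 := LinearMap.finrank_range_add_finrank_ker g'.toLinearMap
  have h3 := Submodule.finrank_mono hker
  omega
end

section
/- Let γₙ : [0,1] → ℝ² be Lipschitz curves with γₙ(0)=γₙ(1), converging uniformly to a Lipschitz curve γ : [0,1] → ℝ² with γ(0)=γ(1), and suppose the lengths ℓ(γₙ) are uniformly bounded by M. Then the oriented enclosed areas converge: ∫₀¹ γₙ,₁(t) γₙ,₂′(t) dt → ∫₀¹ γ₁(t) γ₂′(t) dt as n → ∞. -/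
open Set Filter intervalIntegral

section auxiliary
open MeasureTheory

variable {u w : ℝ → ℝ} {Ku Kw : NNReal} {Su Sw : ℝ}

lemma hh_pos (k : ℕ) : 0 < 1/((k:ℝ)+2) := by positivity

lemma hh_le (k : ℕ) : 1/((k:ℝ)+2) ≤ 1/2 := by
  rw [div_le_div_iff₀ (by positivity) two_pos]
  have : (0:ℝ) ≤ (k:ℝ) := Nat.cast_nonneg k
  linarith

lemma hh_tendsto : Tendsto (fun k : ℕ => 1/((k:ℝ)+2)) atTop (nhds 0) := by
  have h1 : Tendsto (fun k : ℕ => ((k:ℝ)+2)) atTop atTop :=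
    tendsto_atTop_add_const_right atTop 2 tendsto_natCast_atTop_atTop
  simpa [one_div, Pi.inv_def] using h1.inv_tendsto_atTop


lemma ae_hasDeriv (hw : LipschitzOnWith Kw w (Icc 0 1)) :
    ∀ᵐ t ∂(volume.restrict (Ioo (0:ℝ) 1)), HasDerivAt w (deriv w t) t := by
  have h1 := hw.ae_differentiableWithinAt_of_mem_real
  rw [ae_restrict_iff' measurableSet_Ioo]
  filter_upwards [h1] with t ht hto
  have h2 : Icc (0:ℝ) 1 ∈ nhds t := Icc_mem_nhds hto.1 hto.2
  exact ((ht (Ioo_subset_Icc_self hto)).differentiableAt h2).hasDerivAt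


lemma deriv_bound (hw : LipschitzOnWith Kw w (Icc 0 1)) {t : ℝ} (ht : t ∈ Ioo (0:ℝ) 1) :
    |deriv w t| ≤ Kw := by
  by_cases hd : DifferentiableAt ℝ w t
  · have h2 : Icc (0:ℝ) 1 ∈ nhds t := Icc_mem_nhds ht.1 ht.2
    have := hd.hasDerivAt.hasFDerivAt.le_of_lipschitzOn h2 hw
    simpa [ContinuousLinearMap.norm_smulRight_apply] using this
  · simp [deriv_zero_of_not_differentiableAt hd]


lemma intInt_mul_deriv (hu : ContinuousOn u (Icc 0 1)) (hSu : ∀ t ∈ Icc (0:ℝ) 1, |u t| ≤ Su)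
    (hw : LipschitzOnWith Kw w (Icc 0 1)) :
    IntervalIntegrable (fun t => u t * deriv w t) volume 0 1 := by
  rw [intervalIntegrable_iff_integrableOn_Ioo_of_le zero_le_one]
  have hm : AEStronglyMeasurable (fun t => u t * deriv w t)
      (volume.restrict (Ioo (0:ℝ) 1)) := by
    exact ((hu.mono Ioo_subset_Icc_self).aestronglyMeasurable measurableSet_Ioo).mul
      ((measurable_deriv w).aestronglyMeasurable.restrict)
  refine (integrable_const (Su * Kw)).mono' hm ?_
  rw [ae_restrict_iff' measurableSet_Ioo]
  filter_upwards with t ht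
  rw [Real.norm_eq_abs, abs_mul]
  exact mul_le_mul (hSu t (Ioo_subset_Icc_self ht)) (deriv_bound hw ht) (abs_nonneg _)
    ((abs_nonneg (u 0)).trans (hSu 0 (by norm_num)))

lemma key_tendsto {h : ℕ → ℝ} (hpos : ∀ k, 0 < h k) (hle : ∀ k, h k ≤ 1/2)
    (htend : Tendsto h atTop (nhds 0))
    (hw : LipschitzOnWith Kw w (Icc 0 1))
    (hu : ContinuousOn u (Icc 0 1)) (hSu : ∀ t ∈ Icc (0:ℝ) 1, |u t| ≤ Su)
    (Φ : ℝ → ℝ) (hΦc : Continuous Φ) (hΦ : ∀ x, |Φ x| ≤ |x|) :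
    Tendsto (fun k : ℕ => ∫ t in (0:ℝ)..(1 - h k), u t * Φ ((w (t + h k) - w t) / h k))
      atTop (nhds (∫ t in (0:ℝ)..1, u t * Φ (deriv w t))) := by
  have Su0 : 0 ≤ Su := (abs_nonneg (u 0)).trans (hSu 0 (by norm_num))
  set μ := volume.restrict (Ioo (0:ℝ) 1) with hμ
  haveI : IsFiniteMeasure μ := ⟨by simp [hμ, Real.volume_Ioo]⟩
  set F : ℕ → ℝ → ℝ := fun k =>
    (Ioc (0:ℝ) (1 - h k)).indicator (fun t => u t * Φ ((w (t + h k) - w t) / h k)) with hF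
  have hsub : ∀ k, Ioc (0:ℝ) (1 - h k) ⊆ Ioo 0 1 := fun k t ht =>
    ⟨ht.1, lt_of_le_of_lt ht.2 (by linarith [hpos k])⟩
  have hIccsub : ∀ k, Ioc (0:ℝ) (1 - h k) ⊆ Icc 0 1 := fun k t ht =>
    ⟨ht.1.le, ht.2.trans (by linarith [hpos k])⟩
  have hmem : ∀ k t, t ∈ Ioc (0:ℝ) (1 - h k) → t + h k ∈ Icc (0:ℝ) 1 := fun k t ht =>
    ⟨by linarith [ht.1, hpos k], by linarith [ht.2]⟩
  have hrr : ∀ k, μ.restrict (Ioc (0:ℝ) (1 - h k)) = volume.restrict (Ioc (0:ℝ) (1 - h k)) := by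
    intro k
    rw [hμ, Measure.restrict_restrict measurableSet_Ioc, inter_eq_self_of_subset_left (hsub k)]
  have Fmeas : ∀ k, AEStronglyMeasurable (F k) μ := by
    intro k
    rw [hF, aestronglyMeasurable_indicator_iff measurableSet_Ioc, hrr k]
    have cont : ContinuousOn (fun t => u t * Φ ((w (t + h k) - w t) / h k))
        (Ioc (0:ℝ) (1 - h k)) := by
      have cw : ContinuousOn (fun t => w (t + h k)) (Ioc (0:ℝ) (1 - h k)) :=
        hw.continuousOn.comp ((continuous_add_right (h k)).continuousOn) (hmem k)
      exact ((hu.mono (hIccsub k)).mul (hΦc.comp_continuousOn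
        (((cw.sub (hw.continuousOn.mono (hIccsub k))).div_const _))))
    exact cont.aestronglyMeasurable measurableSet_Ioc
  have hbound : ∀ k, ∀ᵐ t ∂μ, ‖F k t‖ ≤ Su * Kw := by
    intro k
    filter_upwards with t
    by_cases ht : t ∈ Ioc (0:ℝ) (1 - h k)
    · simp only [hF, indicator_of_mem ht, Real.norm_eq_abs, abs_mul]
      have hQ : |(w (t + h k) - w t) / h k| ≤ Kw := by
        rw [abs_div, abs_of_pos (hpos k), div_le_iff₀ (hpos k)]
        have := hw.dist_le_mul (t + h k) (hmem k t ht) t (hIccsub k ht)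
        rw [Real.dist_eq, Real.dist_eq] at this
        have he : t + h k - t = h k := by ring
        rw [he, abs_of_pos (hpos k)] at this
        exact this
      exact mul_le_mul (hSu t (hIccsub k ht)) ((hΦ _).trans hQ) (abs_nonneg _) Su0
    · simp only [hF, indicator_of_notMem ht]
      simpa using mul_nonneg Su0 Kw.coe_nonneg
  have hlim : ∀ᵐ t ∂μ, Tendsto (fun k => F k t) atTop
      (nhds (u t * Φ (deriv w t))) := by
    filter_upwards [ae_hasDeriv hw, ae_restrict_mem measurableSet_Ioo] with t hD ht
    have h1 : Tendsto (fun k => t + h k) atTop (nhdsWithin t {t}ᶜ) := by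
      rw [tendsto_nhdsWithin_iff]
      constructor
      · simpa using tendsto_const_nhds.add htend
      · filter_upwards with k
        simp only [mem_compl_iff, mem_singleton_iff]
        intro hc
        nlinarith [hpos k, congrArg (· - t) hc]
    have hQ : Tendsto (fun k => (w (t + h k) - w t) / h k) atTop (nhds (deriv w t)) := by
      have h2 := (hasDerivAt_iff_tendsto_slope.1 hD).comp h1
      refine h2.congr fun k => ?_
      rw [Function.comp_apply, slope_def_field]
      congr 1 <;> ring_nf
    have hev : (fun k => u t * Φ ((w (t + h k) - w t) / h k)) =ᶠ[atTop] fun k => F k t := by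
      have hqq : ∀ᶠ k in atTop, h k < 1 - t := htend.eventually (eventually_lt_nhds (by linarith [ht.2]))
      filter_upwards [hqq] with k hk
      have hmem2 : t ∈ Ioc (0:ℝ) (1 - h k) := ⟨ht.1, by linarith⟩
      simp only [hF, indicator_of_mem hmem2]
    exact (tendsto_const_nhds.mul ((hΦc.tendsto _).comp hQ)).congr' hev
  have main := tendsto_integral_of_dominated_convergence (fun _ => Su * Kw) Fmeas
    (integrable_const _) hbound hlim
  have eq1 : ∀ k, ∫ t, F k t ∂μ = ∫ t in (0:ℝ)..(1 - h k), u t * Φ ((w (t + h k) - w t) / h k) := by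
    intro k
    show ∫ t, (Ioc (0:ℝ) (1 - h k)).indicator _ t ∂μ = _
    rw [MeasureTheory.integral_indicator measurableSet_Ioc, hrr k,
      intervalIntegral.integral_of_le (by linarith [hle k] : (0:ℝ) ≤ 1 - h k)]
  have eq2 : ∫ t, u t * Φ (deriv w t) ∂μ = ∫ t in (0:ℝ)..1, u t * Φ (deriv w t) := by
    rw [hμ, intervalIntegral.integral_of_le zero_le_one, integral_Ioc_eq_integral_Ioo]
  rw [eq2] at main
  exact main.congr eq1

lemma integral_mul_deriv_bound (hu : LipschitzOnWith Ku u (Icc 0 1))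
    (hw : LipschitzOnWith Kw w (Icc 0 1))
    (hSu : ∀ t ∈ Icc (0:ℝ) 1, |u t| ≤ Su) (hSw : ∀ t ∈ Icc (0:ℝ) 1, |w t| ≤ Sw) :
    |∫ t in (0:ℝ)..1, u t * deriv w t| ≤ ((Ku:ℝ) + 2*Su) * Sw := by
  have Su0 : 0 ≤ Su := (abs_nonneg (u 0)).trans (hSu 0 (by norm_num))
  have Sw0 : 0 ≤ Sw := (abs_nonneg (w 0)).trans (hSw 0 (by norm_num))
  have key := key_tendsto hh_pos hh_le hh_tendsto hw hu.continuousOn hSu id continuous_id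
    (fun x => le_rfl)
  simp only [id_eq] at key
  refine le_of_tendsto ((continuous_abs.tendsto _).comp key)
    (Filter.Eventually.of_forall fun k => ?_)
  simp only [Function.comp_apply]
  set h : ℝ := 1/((k:ℝ)+2) with hdef
  have h0 : 0 < h := hh_pos k
  have h12 : h ≤ 1/2 := hh_le k
  -- continuity helpers
  have cu : ContinuousOn u (Icc 0 1) := hu.continuousOn
  have cw : ContinuousOn w (Icc 0 1) := hw.continuousOn
  have cq : ∀ a b : ℝ, 0 ≤ a → a ≤ b → b ≤ 1 → IntervalIntegrable (fun s => u s * w s / h) volume a b := by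
    intro a b ha hab hb
    apply ContinuousOn.intervalIntegrable
    rw [uIcc_of_le hab]
    exact ((cu.mono (Icc_subset_Icc ha hb)).mul (cw.mono (Icc_subset_Icc ha hb))).div_const _
  have cush : ContinuousOn (fun s => u (s - h)) (Icc h 1) := by
    apply cu.comp (continuous_sub_right h).continuousOn
    intro s hs
    refine ⟨?_, ?_⟩
    · show (0:ℝ) ≤ s - h; linarith [hs.1]
    · show s - h ≤ 1; linarith [hs.2]
  have cr : IntervalIntegrable (fun s => (u (s - h) - u s) * w s / h) volume h 1 := by
    apply ContinuousOn.intervalIntegrable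
    rw [uIcc_of_le (by linarith)]
    exact ((cush.sub (cu.mono (Icc_subset_Icc (by linarith) le_rfl))).mul
      (cw.mono (Icc_subset_Icc (by linarith) le_rfl))).div_const _
  have cp : IntervalIntegrable (fun s => u (s - h) * w s / h) volume h 1 := by
    apply ContinuousOn.intervalIntegrable
    rw [uIcc_of_le (by linarith)]
    exact (cush.mul (cw.mono (Icc_subset_Icc (by linarith) le_rfl))).div_const _
  -- rewrite the interval integral
  have e1 : ∫ t in (0:ℝ)..(1-h), u t * ((w (t + h) - w t) / h)
      = (∫ t in (0:ℝ)..(1-h), u (t + h - h) * w (t + h) / h) - ∫ t in (0:ℝ)..(1-h), u t * w t / h := by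
    rw [← intervalIntegral.integral_sub]
    · apply intervalIntegral.integral_congr
      intro t _
      show u t * ((w (t + h) - w t) / h) = u (t + h - h) * w (t + h) / h - u t * w t / h
      rw [show t + h - h = t by ring]
      ring
    · apply ContinuousOn.intervalIntegrable
      rw [uIcc_of_le (by linarith)]
      have hmap : MapsTo (fun t : ℝ => t + h) (Icc 0 (1-h)) (Icc 0 1) := by
        intro t ht
        refine ⟨?_, ?_⟩
        · show (0:ℝ) ≤ t + h; linarith [ht.1]
        · show t + h ≤ 1; linarith [ht.2]
      have cwh : ContinuousOn (fun t => w (t + h)) (Icc 0 (1-h)) :=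
        cw.comp (continuous_add_right h).continuousOn hmap
      have : ContinuousOn (fun t => u (t + h - h) * w (t + h) / h) (Icc 0 (1-h)) := by
        have cuh : ContinuousOn (fun t => u (t + h - h)) (Icc 0 (1-h)) := by
          apply cu.comp ((continuous_add_right h).sub continuous_const).continuousOn
          intro t ht
          show t + h - h ∈ Icc (0:ℝ) 1
          rw [show t + h - h = t by ring]
          exact ⟨ht.1, by linarith [ht.2]⟩
        exact (cuh.mul cwh).div_const _
      exact this
    · exact cq 0 (1-h) le_rfl (by linarith) (by linarith)
  have e2 : (∫ t in (0:ℝ)..(1-h), u (t + h - h) * w (t + h) / h)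
      = ∫ s in h..(1:ℝ), u (s - h) * w s / h := by
    have := intervalIntegral.integral_comp_add_right (a := (0:ℝ)) (b := 1-h)
      (fun s => u (s - h) * w s / h) h
    rw [this]
    norm_num
  have e3 : (∫ s in h..(1:ℝ), u (s - h) * w s / h)
      = (∫ s in h..(1:ℝ), (u (s - h) - u s) * w s / h) + ∫ s in h..(1:ℝ), u s * w s / h := by
    rw [← intervalIntegral.integral_add cr (cq h 1 h0.le (by linarith) le_rfl)]
    apply intervalIntegral.integral_congr
    intro s _
    ring
  have e4 : (∫ s in h..(1:ℝ), u s * w s / h) - (∫ s in (0:ℝ)..(1-h), u s * w s / h)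
      = (∫ s in (1-h)..(1:ℝ), u s * w s / h) - ∫ s in (0:ℝ)..h, u s * w s / h := by
    have a1 := intervalIntegral.integral_add_adjacent_intervals
      (cq h (1-h) h0.le (by linarith) (by linarith)) (cq (1-h) 1 (by linarith) (by linarith) le_rfl)
    have a2 := intervalIntegral.integral_add_adjacent_intervals
      (cq 0 h le_rfl h0.le (by linarith)) (cq h (1-h) h0.le (by linarith) (by linarith))
    linarith
  rw [e1, e2, e3]
  have br : |∫ s in h..(1:ℝ), (u (s - h) - u s) * w s / h| ≤ (Ku:ℝ) * Sw := by
    have := intervalIntegral.norm_integral_le_of_norm_le_const (C := (Ku:ℝ) * Sw)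
      (f := fun s => (u (s - h) - u s) * w s / h) (a := h) (b := 1) ?_
    · rw [Real.norm_eq_abs] at this
      refine this.trans ?_
      rw [abs_of_nonneg (by linarith)]
      nlinarith [Ku.coe_nonneg, mul_nonneg Ku.coe_nonneg Sw0]
    · intro x hx
      rw [uIoc_of_le (by linarith)] at hx
      have hx1 : x - h ∈ Icc (0:ℝ) 1 := ⟨by linarith [hx.1], by linarith [hx.2]⟩
      have hx2 : x ∈ Icc (0:ℝ) 1 := ⟨by linarith [hx.1, h0], hx.2⟩
      rw [Real.norm_eq_abs, abs_div, abs_of_pos h0, div_le_iff₀ h0, abs_mul]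
      have hud : |u (x - h) - u x| ≤ (Ku:ℝ) * h := by
        have := hu.dist_le_mul (x - h) hx1 x hx2
        rw [Real.dist_eq, Real.dist_eq] at this
        have hxe : |x - h - x| = h := by
          rw [show x - h - x = -h by ring, abs_neg, abs_of_pos h0]
        rw [hxe] at this
        exact this
      calc |u (x - h) - u x| * |w x| ≤ ((Ku:ℝ) * h) * Sw :=
            mul_le_mul hud (hSw x hx2) (abs_nonneg _) (by positivity)
        _ = (Ku:ℝ) * Sw * h := by ring
  have bq : ∀ a b : ℝ, 0 ≤ a → a ≤ b → b ≤ 1 → |b - a| ≤ h →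
      |∫ s in a..b, u s * w s / h| ≤ Su * Sw := by
    intro a b ha hab hb hba
    have := intervalIntegral.norm_integral_le_of_norm_le_const (C := Su * Sw / h)
      (f := fun s => u s * w s / h) (a := a) (b := b) ?_
    · rw [Real.norm_eq_abs] at this
      refine this.trans ?_
      rw [div_mul_eq_mul_div, div_le_iff₀ h0]
      nlinarith [mul_nonneg Su0 Sw0, abs_nonneg (b - a)]
    · intro x hx
      have hx' : x ∈ Icc (0:ℝ) 1 := by
        rw [uIoc_of_le hab] at hx
        exact ⟨by linarith [hx.1], by linarith [hx.2]⟩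
      rw [Real.norm_eq_abs, abs_div, abs_of_pos h0, div_le_div_iff_of_pos_right h0, abs_mul]
      exact mul_le_mul (hSu x hx') (hSw x hx') (abs_nonneg _) Su0
  have b2 := bq (1-h) 1 (by linarith) (by linarith) le_rfl (by rw [show (1:ℝ) - (1-h) = h by ring, abs_of_pos h0])
  have b3 := bq 0 h le_rfl h0.le (by linarith) (by rw [sub_zero, abs_of_pos h0])
  calc |(∫ s in h..(1:ℝ), (u (s - h) - u s) * w s / h) + (∫ s in h..(1:ℝ), u s * w s / h)
        - ∫ s in (0:ℝ)..(1-h), u s * w s / h|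
      = |(∫ s in h..(1:ℝ), (u (s - h) - u s) * w s / h)
        + ((∫ s in (1-h)..(1:ℝ), u s * w s / h) - ∫ s in (0:ℝ)..h, u s * w s / h)| := by
        rw [show (∫ s in h..(1:ℝ), (u (s - h) - u s) * w s / h) + (∫ s in h..(1:ℝ), u s * w s / h)
          - ∫ s in (0:ℝ)..(1-h), u s * w s / h
          = (∫ s in h..(1:ℝ), (u (s - h) - u s) * w s / h)
          + ((∫ s in h..(1:ℝ), u s * w s / h) - ∫ s in (0:ℝ)..(1-h), u s * w s / h) by ring, e4]
    _ ≤ |∫ s in h..(1:ℝ), (u (s - h) - u s) * w s / h|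
        + (|∫ s in (1-h)..(1:ℝ), u s * w s / h| + |∫ s in (0:ℝ)..h, u s * w s / h|) :=
        (abs_add_le _ _).trans (by gcongr; exact abs_sub _ _)
    _ ≤ (Ku:ℝ) * Sw + (Su * Sw + Su * Sw) := by gcongr
    _ = ((Ku:ℝ) + 2*Su) * Sw := by ring

lemma integral_abs_deriv_le (hw : LipschitzOnWith Kw w (Icc 0 1))
    (hfin : eVariationOn w (Icc 0 1) ≠ ⊤) :
    ∫ t in (0:ℝ)..1, |deriv w t| ≤ (eVariationOn w (Icc 0 1)).toReal := by
  have key := key_tendsto (Su := 1) hh_pos hh_le hh_tendsto hw (continuousOn_const (c := (1:ℝ)))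
    (fun t _ => by norm_num) (fun x => |x|) continuous_abs (fun x => by rw [abs_abs])
  simp only [one_mul] at key
  have hbv' : BoundedVariationOn w (Icc 0 1) := hfin
  have hbv : LocallyBoundedVariationOn w (Icc 0 1) := hbv'.locallyBoundedVariationOn
  set V : ℝ → ℝ := variationOnFromTo w (Icc 0 1) 0 with hVdef
  have h0mem : (0:ℝ) ∈ Icc (0:ℝ) 1 := ⟨le_rfl, zero_le_one⟩
  have hV0 : V 0 = 0 := variationOnFromTo.self w (Icc 0 1) 0
  have hmono : MonotoneOn V (Icc 0 1) := variationOnFromTo.monotoneOn hbv h0mem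
  have hV1 : V 1 = (eVariationOn w (Icc 0 1)).toReal := by
    rw [hVdef, variationOnFromTo.eq_of_le w (Icc 0 1) zero_le_one, inter_self]
  rw [← hV1]
  refine le_of_tendsto key (Filter.Eventually.of_forall fun k => ?_)
  set h : ℝ := 1/((k:ℝ)+2) with hdef
  have h0 : 0 < h := hh_pos k
  have h12 : h ≤ 1/2 := hh_le k
  have cw : ContinuousOn w (Icc 0 1) := hw.continuousOn
  -- integrability of V on subintervals
  have iV : ∀ a b : ℝ, 0 ≤ a → a ≤ b → b ≤ 1 → IntervalIntegrable V volume a b := by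
    intro a b ha hab hb
    apply MonotoneOn.intervalIntegrable
    rw [uIcc_of_le hab]
    exact hmono.mono (Icc_subset_Icc ha hb)
  have iVh : IntervalIntegrable (fun t => V (t + h)) volume 0 (1-h) := by
    apply MonotoneOn.intervalIntegrable
    rw [uIcc_of_le (by linarith)]
    intro x hx y hy hxy
    exact hmono ⟨by linarith [hx.1], by linarith [hx.2]⟩ ⟨by linarith [hy.1], by linarith [hy.2]⟩
      (by linarith)
  have iQ : IntervalIntegrable (fun t => |(w (t + h) - w t) / h|) volume 0 (1-h) := by
    apply ContinuousOn.intervalIntegrable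
    rw [uIcc_of_le (by linarith)]
    have hmap : MapsTo (fun t : ℝ => t + h) (Icc 0 (1-h)) (Icc 0 1) := by
      intro t ht
      refine ⟨?_, ?_⟩
      · show (0:ℝ) ≤ t + h; linarith [ht.1]
      · show t + h ≤ 1; linarith [ht.2]
    have cwh : ContinuousOn (fun t => w (t + h)) (Icc 0 (1-h)) :=
      cw.comp (continuous_add_right h).continuousOn hmap
    exact ((cwh.sub (cw.mono (Icc_subset_Icc le_rfl (by linarith)))).div_const _).abs
  -- pointwise bound
  have step1 : ∀ t ∈ Icc (0:ℝ) (1-h), |(w (t + h) - w t) / h| ≤ (V (t + h) - V t) / h := by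
    intro t ht
    have htm : t ∈ Icc (0:ℝ) 1 := ⟨ht.1, by linarith [ht.2]⟩
    have hthm : t + h ∈ Icc (0:ℝ) 1 := ⟨by linarith [ht.1], by linarith [ht.2]⟩
    have hvt : V (t + h) - V t = variationOnFromTo w (Icc 0 1) t (t + h) := by
      have := variationOnFromTo.add hbv h0mem htm hthm
      rw [hVdef]; linarith
    have hd : |w (t + h) - w t| ≤ variationOnFromTo w (Icc 0 1) t (t + h) := by
      rw [variationOnFromTo.eq_of_le w (Icc 0 1) (by linarith : t ≤ t + h)]
      have e1 : edist (w t) (w (t + h)) ≤ eVariationOn w (Icc 0 1 ∩ Icc t (t + h)) :=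
        eVariationOn.edist_le w ⟨htm, le_rfl, by linarith⟩ ⟨hthm, by linarith, le_rfl⟩
      have hne : eVariationOn w (Icc 0 1 ∩ Icc t (t + h)) ≠ ⊤ :=
        ne_top_of_le_ne_top hfin (eVariationOn.mono w inter_subset_left)
      have e2 : |w (t + h) - w t| = (edist (w t) (w (t + h))).toReal := by
        rw [edist_dist, Real.dist_eq, ENNReal.toReal_ofReal (abs_nonneg _), abs_sub_comm]
      rw [e2]
      exact ENNReal.toReal_mono hne e1
    rw [abs_div, abs_of_pos h0]
    exact div_le_div_of_nonneg_right (by linarith [hd]) h0.le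
  -- integral comparison and translation computation
  have step2 : ∫ t in (0:ℝ)..(1-h), |(w (t + h) - w t) / h|
      ≤ ∫ t in (0:ℝ)..(1-h), (V (t + h) - V t) / h :=
    intervalIntegral.integral_mono_on (by linarith) iQ ((iVh.sub (iV 0 (1-h) le_rfl (by linarith)
      (by linarith))).div_const _) step1
  have step3 : ∫ t in (0:ℝ)..(1-h), (V (t + h) - V t) / h
      = ((∫ t in h..(1:ℝ), V t) - ∫ t in (0:ℝ)..(1-h), V t) / h := by
    rw [intervalIntegral.integral_div, intervalIntegral.integral_sub iVh
      (iV 0 (1-h) le_rfl (by linarith) (by linarith))]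
    congr 2
    have := intervalIntegral.integral_comp_add_right (a := (0:ℝ)) (b := 1-h) V h
    rw [this]
    norm_num
  have step4 : (∫ t in h..(1:ℝ), V t) - ∫ t in (0:ℝ)..(1-h), V t
      = (∫ t in (1-h)..(1:ℝ), V t) - ∫ t in (0:ℝ)..h, V t := by
    have a1 := intervalIntegral.integral_add_adjacent_intervals
      (iV h (1-h) h0.le (by linarith) (by linarith)) (iV (1-h) 1 (by linarith) (by linarith) le_rfl)
    have a2 := intervalIntegral.integral_add_adjacent_intervals
      (iV 0 h le_rfl h0.le (by linarith)) (iV h (1-h) h0.le (by linarith) (by linarith))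
    linarith
  have step5 : ∫ t in (1-h)..(1:ℝ), V t ≤ h * V 1 := by
    have := intervalIntegral.integral_mono_on (by linarith : (1:ℝ)-h ≤ 1)
      (iV (1-h) 1 (by linarith) (by linarith) le_rfl) intervalIntegrable_const
      (fun x hx => hmono ⟨by linarith [hx.1], hx.2⟩ ⟨zero_le_one, le_rfl⟩ hx.2)
    rw [intervalIntegral.integral_const, smul_eq_mul] at this
    calc ∫ t in (1-h)..(1:ℝ), V t ≤ (1 - (1-h)) * V 1 := this
      _ = h * V 1 := by ring
  have step6 : 0 ≤ ∫ t in (0:ℝ)..h, V t := by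
    have := intervalIntegral.integral_mono_on (by linarith : (0:ℝ) ≤ h)
      (_root_.intervalIntegrable_const (c := (0:ℝ)))
      (iV 0 h le_rfl h0.le (by linarith))
      (fun x hx => by
        have := hmono h0mem ⟨hx.1, by linarith [hx.2]⟩ hx.1
        rw [hV0] at this
        exact this)
    simpa using this
  calc ∫ t in (0:ℝ)..(1-h), |(w (t + h) - w t) / h| ≤ _ := step2
    _ = ((∫ t in h..(1:ℝ), V t) - ∫ t in (0:ℝ)..(1-h), V t) / h := step3
    _ = ((∫ t in (1-h)..(1:ℝ), V t) - ∫ t in (0:ℝ)..h, V t) / h := by rw [step4]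
    _ ≤ (h * V 1) / h := by
        apply div_le_div_of_nonneg_right (by linarith) h0.le
    _ = V 1 := by field_simp

end auxiliary

section main
open MeasureTheory

/-- If closed Lipschitz curves `γₙ : [0,1] → ℝ²` converge uniformly to a closed Lipschitz
curve `γ₀` and their lengths are uniformly bounded by `M`, then the oriented enclosed
areas `∫₀¹ γₙ,₁ γₙ,₂′` converge to `∫₀¹ γ₀,₁ γ₀,₂′`. -/
theorem stmt_7 (γ : ℕ → ℝ → ℝ × ℝ) (γ₀ : ℝ → ℝ × ℝ) (K : ℕ → NNReal) (K₀ : NNReal) (M : ℝ)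
    (hγ : ∀ n, LipschitzOnWith (K n) (γ n) (Icc 0 1))
    (hγ₀ : LipschitzOnWith K₀ γ₀ (Icc 0 1))
    (hclosed : ∀ n, γ n 0 = γ n 1) (hclosed₀ : γ₀ 0 = γ₀ 1)
    (hunif : TendstoUniformlyOn γ γ₀ atTop (Icc 0 1))
    (hlen : ∀ n, eVariationOn (γ n) (Icc 0 1) ≤ ENNReal.ofReal M) :
    Tendsto (fun n => ∫ t in (0:ℝ)..1, (γ n t).1 * deriv (fun s => (γ n s).2) t)
      atTop (nhds (∫ t in (0:ℝ)..1, (γ₀ t).1 * deriv (fun s => (γ₀ s).2) t)) := by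
  -- component Lipschitz bounds
  have hf : LipschitzOnWith (1*K₀) (fun t => (γ₀ t).1) (Icc 0 1) :=
    LipschitzWith.comp_lipschitzOnWith LipschitzWith.prod_fst hγ₀
  have hg : LipschitzOnWith (1*K₀) (fun t => (γ₀ t).2) (Icc 0 1) :=
    LipschitzWith.comp_lipschitzOnWith LipschitzWith.prod_snd hγ₀
  have hfn : ∀ n, LipschitzOnWith (1*(K n)) (fun t => (γ n t).1) (Icc 0 1) :=
    fun n => LipschitzWith.comp_lipschitzOnWith LipschitzWith.prod_fst (hγ n)
  have hgn : ∀ n, LipschitzOnWith (1*(K n)) (fun t => (γ n t).2) (Icc 0 1) :=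
    fun n => LipschitzWith.comp_lipschitzOnWith LipschitzWith.prod_snd (hγ n)
  -- sup bound for the first component of the limit
  obtain ⟨Sf, hSf'⟩ := isCompact_Icc.exists_bound_of_continuousOn hf.continuousOn
  have hSf : ∀ t ∈ Icc (0:ℝ) 1, |(γ₀ t).1| ≤ Sf := by
    intro t ht; simpa [Real.norm_eq_abs] using hSf' t ht
  have hSf0 : (0:ℝ) ≤ Sf := (abs_nonneg _).trans (hSf 0 ⟨le_rfl, zero_le_one⟩)
  -- variation bounds
  set M' : ℝ := (ENNReal.ofReal M).toReal with hM'def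
  have hM'0 : 0 ≤ M' := ENNReal.toReal_nonneg
  have hvar : ∀ n, eVariationOn (fun t => (γ n t).2) (Icc 0 1) ≤ ENNReal.ofReal M := by
    intro n
    have h1 := LipschitzOnWith.comp_eVariationOn_le
      (LipschitzWith.prod_snd.lipschitzOnWith (s := univ)) (mapsTo_univ (γ n) (Icc 0 1))
    refine le_trans h1 ?_
    simpa using hlen n
  have hfin : ∀ n, eVariationOn (fun t => (γ n t).2) (Icc 0 1) ≠ ⊤ :=
    fun n => ne_top_of_le_ne_top ENNReal.ofReal_ne_top (hvar n)
  have hintvar : ∀ n, ∫ t in (0:ℝ)..1, |deriv (fun s => (γ n s).2) t| ≤ M' := by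
    intro n
    exact (integral_abs_deriv_le (hgn n) (hfin n)).trans
      (ENNReal.toReal_mono ENNReal.ofReal_ne_top (hvar n))
  -- main estimate
  rw [Metric.tendsto_atTop]
  intro ε hε
  set c : ℝ := ((1*K₀ : NNReal) : ℝ) with hcdef
  have hc0 : 0 ≤ c := NNReal.coe_nonneg _
  set C : ℝ := M' + c + 2*Sf + 1 with hCdef
  have hC0 : 0 < C := by positivity
  set δ : ℝ := ε / C with hδdef
  have hδ0 : 0 < δ := div_pos hε hC0
  have hev := (Metric.tendstoUniformlyOn_iff.1 hunif) δ hδ0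
  obtain ⟨N, hN⟩ := eventually_atTop.1 hev
  refine ⟨N, fun n hn => ?_⟩
  have hNn := hN n hn
  -- componentwise closeness
  have hb1 : ∀ t ∈ Icc (0:ℝ) 1, |(γ n t).1 - (γ₀ t).1| ≤ δ := by
    intro t ht
    calc |(γ n t).1 - (γ₀ t).1| = ‖(γ n t - γ₀ t).1‖ := by simp [Real.norm_eq_abs]
      _ ≤ ‖γ n t - γ₀ t‖ := norm_fst_le _
      _ = dist (γ₀ t) (γ n t) := by rw [dist_comm, dist_eq_norm]
      _ ≤ δ := (hNn t ht).le
  have hb2 : ∀ t ∈ Icc (0:ℝ) 1, |(γ n t).2 - (γ₀ t).2| ≤ δ := by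
    intro t ht
    calc |(γ n t).2 - (γ₀ t).2| = ‖(γ n t - γ₀ t).2‖ := by simp [Real.norm_eq_abs]
      _ ≤ ‖γ n t - γ₀ t‖ := norm_snd_le _
      _ = dist (γ₀ t) (γ n t) := by rw [dist_comm, dist_eq_norm]
      _ ≤ δ := (hNn t ht).le
  -- the difference of second components
  have hw : LipschitzOnWith (1*(K n) + 1*K₀) (fun t => (γ n t).2 - (γ₀ t).2) (Icc 0 1) := by
    apply LipschitzOnWith.of_dist_le_mul
    intro x hx y hy
    have d1 := (hgn n).dist_le_mul x hx y hy
    have d2 := hg.dist_le_mul x hx y hy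
    rw [Real.dist_eq, Real.dist_eq] at d1 d2 ⊢
    push_cast
    calc |(γ n x).2 - (γ₀ x).2 - ((γ n y).2 - (γ₀ y).2)|
        ≤ |(γ n x).2 - (γ n y).2| + |(γ₀ x).2 - (γ₀ y).2| := by
          rw [show (γ n x).2 - (γ₀ x).2 - ((γ n y).2 - (γ₀ y).2)
            = ((γ n x).2 - (γ n y).2) - ((γ₀ x).2 - (γ₀ y).2) by ring]
          exact abs_sub _ _
      _ ≤ ((1*(K n) : NNReal):ℝ) * |x - y| + ((1*K₀ : NNReal):ℝ) * |x - y| := add_le_add d1 d2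
      _ = (((1*(K n) : NNReal):ℝ) + ((1*K₀:NNReal):ℝ)) * |x - y| := by ring
      _ = _ := by push_cast; ring
  -- a.e. identity for the derivative of the difference
  have hae : ∀ᵐ t ∂(volume.restrict (Ioo (0:ℝ) 1)),
      deriv (fun s => (γ n s).2 - (γ₀ s).2) t
        = deriv (fun s => (γ n s).2) t - deriv (fun s => (γ₀ s).2) t := by
    filter_upwards [ae_hasDeriv (hgn n), ae_hasDeriv hg] with t h1 h2
    exact (h1.sub h2).deriv
  have hone : ∀ᵐ t ∂(volume : Measure ℝ), t ≠ (1:ℝ) := by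
    rw [ae_iff]
    simpa using Real.volume_singleton
  -- integrability facts
  have int1 : IntervalIntegrable (fun t => ((γ n t).1 - (γ₀ t).1) * deriv (fun s => (γ n s).2) t)
      volume 0 1 :=
    intInt_mul_deriv ((hfn n).continuousOn.sub hf.continuousOn) hb1 (hgn n)
  have int2 : IntervalIntegrable (fun t => (γ₀ t).1 * deriv (fun s => (γ n s).2) t) volume 0 1 :=
    intInt_mul_deriv hf.continuousOn hSf (hgn n)
  have int3 : IntervalIntegrable (fun t => (γ₀ t).1 * deriv (fun s => (γ₀ s).2) t) volume 0 1 :=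
    intInt_mul_deriv hf.continuousOn hSf hg
  -- splitting
  have hsplit : ∫ t in (0:ℝ)..1, (γ n t).1 * deriv (fun s => (γ n s).2) t
      = (∫ t in (0:ℝ)..1, ((γ n t).1 - (γ₀ t).1) * deriv (fun s => (γ n s).2) t)
        + ∫ t in (0:ℝ)..1, (γ₀ t).1 * deriv (fun s => (γ n s).2) t := by
    rw [← intervalIntegral.integral_add int1 int2]
    apply intervalIntegral.integral_congr
    intro t _
    show (γ n t).1 * deriv (fun s => (γ n s).2) t
      = ((γ n t).1 - (γ₀ t).1) * deriv (fun s => (γ n s).2) t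
        + (γ₀ t).1 * deriv (fun s => (γ n s).2) t
    ring
  have hBeq : (∫ t in (0:ℝ)..1, (γ₀ t).1 * deriv (fun s => (γ n s).2) t)
      - ∫ t in (0:ℝ)..1, (γ₀ t).1 * deriv (fun s => (γ₀ s).2) t
      = ∫ t in (0:ℝ)..1, (γ₀ t).1 * deriv (fun s => (γ n s).2 - (γ₀ s).2) t := by
    rw [← intervalIntegral.integral_sub int2 int3]
    apply intervalIntegral.integral_congr_ae
    have hae' := (ae_restrict_iff' measurableSet_Ioo).1 hae
    filter_upwards [hae', hone] with t h1 h2 h3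
    rw [uIoc_of_le zero_le_one] at h3
    have hio : t ∈ Ioo (0:ℝ) 1 := ⟨h3.1, lt_of_le_of_ne h3.2 h2⟩
    rw [h1 hio]
    ring
  -- bound for the first term
  have hA : |∫ t in (0:ℝ)..1, ((γ n t).1 - (γ₀ t).1) * deriv (fun s => (γ n s).2) t| ≤ δ * M' := by
    have habs : |∫ t in (0:ℝ)..1, ((γ n t).1 - (γ₀ t).1) * deriv (fun s => (γ n s).2) t|
        ≤ ∫ t in (0:ℝ)..1, |((γ n t).1 - (γ₀ t).1) * deriv (fun s => (γ n s).2) t| :=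
      intervalIntegral.abs_integral_le_integral_abs zero_le_one
    refine habs.trans ?_
    have hmono := intervalIntegral.integral_mono_on zero_le_one int1.abs
      ((intInt_mul_deriv (u := fun _ => (1:ℝ)) (Su := 1) continuousOn_const (fun t _ => by norm_num) (hgn n)).abs.const_mul δ)
      (fun t ht => ?_)
    · refine hmono.trans ?_
      have : (∫ t in (0:ℝ)..1, δ * |1 * deriv (fun s => (γ n s).2) t|)
          = δ * ∫ t in (0:ℝ)..1, |deriv (fun s => (γ n s).2) t| := by
        rw [intervalIntegral.integral_const_mul]
        congr 1
        apply intervalIntegral.integral_congr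
        intro t _
        show |1 * deriv (fun s => (γ n s).2) t| = |deriv (fun s => (γ n s).2) t|
        rw [one_mul]
      rw [this]
      exact mul_le_mul_of_nonneg_left (hintvar n) hδ0.le
    · show |((γ n t).1 - (γ₀ t).1) * deriv (fun s => (γ n s).2) t|
        ≤ δ * |1 * deriv (fun s => (γ n s).2) t|
      rw [abs_mul, one_mul]
      exact mul_le_mul_of_nonneg_right (hb1 t ht) (abs_nonneg _)
  -- bound for the second term
  have hB : |∫ t in (0:ℝ)..1, (γ₀ t).1 * deriv (fun s => (γ n s).2 - (γ₀ s).2) t|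
      ≤ (c + 2*Sf) * δ :=
    integral_mul_deriv_bound hf hw hSf hb2
  -- conclusion
  rw [Real.dist_eq]
  have key : (∫ t in (0:ℝ)..1, (γ n t).1 * deriv (fun s => (γ n s).2) t)
      - ∫ t in (0:ℝ)..1, (γ₀ t).1 * deriv (fun s => (γ₀ s).2) t
      = (∫ t in (0:ℝ)..1, ((γ n t).1 - (γ₀ t).1) * deriv (fun s => (γ n s).2) t)
        + ∫ t in (0:ℝ)..1, (γ₀ t).1 * deriv (fun s => (γ n s).2 - (γ₀ s).2) t := by
    rw [hsplit, ← hBeq]; ring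
  rw [key]
  have hfinal : |(∫ t in (0:ℝ)..1, ((γ n t).1 - (γ₀ t).1) * deriv (fun s => (γ n s).2) t)
      + ∫ t in (0:ℝ)..1, (γ₀ t).1 * deriv (fun s => (γ n s).2 - (γ₀ s).2) t|
      ≤ δ * M' + (c + 2*Sf) * δ := (abs_add_le _ _).trans (add_le_add hA hB)
  have hCδ : C * δ = ε := by
    rw [hδdef]
    field_simp
  calc |(∫ t in (0:ℝ)..1, ((γ n t).1 - (γ₀ t).1) * deriv (fun s => (γ n s).2) t)
      + ∫ t in (0:ℝ)..1, (γ₀ t).1 * deriv (fun s => (γ n s).2 - (γ₀ s).2) t|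
      ≤ δ * M' + (c + 2*Sf) * δ := hfinal
    _ < C * δ := by rw [hCdef]; nlinarith
    _ = ε := hCδ

end main
end

section
/- Let Φ : X → Y be Lipschitz from a quasiconvex metric space, d_Φ the associated pseudometric (infimum of lengths of Φ-images of curves joining two points), Z_Φ the quotient metric space of X by the relation d_Φ(x,y)=0, ψ : X → Z_Φ the quotient map and φ : Z_Φ → Y the induced map with Φ = φ∘ψ. Then for every Lipschitz curve γ : [0,1] → X, the curve α = ψ∘γ in Z_Φ satisfies ℓ(α) = ℓ(φ∘α) = ℓ(Φ∘γ). -/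
open Set

/-- `dPhi Φ x y` is the infimum of the lengths `ℓ(Φ∘γ)` over all rectifiable curves
`γ : [0,1] → X` joining `x` to `y`. -/
noncomputable def dPhi {X Y : Type*} [MetricSpace X] [MetricSpace Y] (Φ : X → Y)
    (x y : X) : ENNReal :=
  ⨅ (γ : ℝ → X) (_ : ContinuousOn γ (Icc 0 1)) (_ : eVariationOn γ (Icc 0 1) ≠ ⊤)
    (_ : γ 0 = x) (_ : γ 1 = y), eVariationOn (Φ ∘ γ) (Icc 0 1)

/-- `X` is `C`-quasiconvex. -/
def IsQuasiconvexSpace (X : Type*) [MetricSpace X] (C : NNReal) : Prop :=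
  ∀ x y : X, ∃ γ : ℝ → X, ContinuousOn γ (Icc 0 1) ∧ γ 0 = x ∧ γ 1 = y ∧
    eVariationOn γ (Icc 0 1) ≤ (C : ENNReal) * edist x y


-- Auxiliary: `dPhi Φ (γ s) (γ t)` is bounded by the variation of `Φ ∘ γ` on `[s, t]`,
-- witnessed by the affine reparametrization of `γ` restricted to `[s, t]`.
lemma dPhi_le_aux {X Y : Type*} [MetricSpace X] [MetricSpace Y] (Φ : X → Y)
    {K : NNReal} {γ : ℝ → X} (hγ : LipschitzOnWith K γ (Icc 0 1))
    {s t : ℝ} (hs : s ∈ Icc (0:ℝ) 1) (ht : t ∈ Icc (0:ℝ) 1) (hst : s ≤ t) :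
    dPhi Φ (γ s) (γ t) ≤ eVariationOn (Φ ∘ γ) (Icc s t) := by
  rcases eq_or_lt_of_le hst with rfl | hlt
  · -- constant curve
    have hconst : dPhi Φ (γ s) (γ s) ≤ eVariationOn (Φ ∘ fun _ : ℝ => γ s) (Icc 0 1) := by
      refine iInf_le_of_le (fun _ => γ s) ?_
      refine iInf_le_of_le continuousOn_const ?_
      refine iInf_le_of_le (by rw [eVariationOn.constant_on (by simp)]; simp) ?_
      exact iInf_le_of_le rfl (iInf_le _ rfl)
    have : eVariationOn (Φ ∘ fun _ : ℝ => γ s) (Icc (0:ℝ) 1) = 0 :=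
      eVariationOn.constant_on (by simp [Set.Subsingleton])
    rw [this] at hconst
    exact hconst.trans zero_le
  · set ρ : ℝ → ℝ := fun u => (t - s) * u + s with hρ
    have himg : ρ '' Icc 0 1 = Icc s t := by
      rw [hρ]
      have := image_affine_Icc' (a := t - s) (by linarith) s 0 1
      simpa using this
    have hmono : Monotone ρ := by
      intro a b hab
      simp only [hρ]
      nlinarith
    have hsub : Icc s t ⊆ Icc (0:ℝ) 1 :=
      Icc_subset_Icc hs.1 ht.2
    have hmaps : MapsTo ρ (Icc 0 1) (Icc (0:ℝ) 1) := fun x hx =>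
      hsub (himg ▸ mem_image_of_mem ρ hx)
    have hvar : ∀ (f : ℝ → Y), eVariationOn (f ∘ ρ) (Icc 0 1) = eVariationOn f (Icc s t) := by
      intro f
      rw [eVariationOn.comp_eq_of_monotoneOn f ρ (hmono.monotoneOn _), himg]
    have hvarX : eVariationOn (γ ∘ ρ) (Icc 0 1) = eVariationOn γ (Icc s t) := by
      rw [eVariationOn.comp_eq_of_monotoneOn γ ρ (hmono.monotoneOn _), himg]
    have hfin : eVariationOn (γ ∘ ρ) (Icc 0 1) ≠ ⊤ := by
      rw [hvarX]
      have h1 : eVariationOn γ (Icc s t) ≤ eVariationOn γ (Icc 0 1 ∩ Icc 0 1) := by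
        apply eVariationOn.mono
        intro x hx
        exact ⟨hsub hx, hsub hx⟩
      have h2 : BoundedVariationOn γ (Icc 0 1 ∩ Icc 0 1) :=
        hγ.locallyBoundedVariationOn 0 1 (by simp) (by simp)
      exact ne_top_of_le_ne_top h2 h1
    refine le_trans ?_ (le_of_eq (hvar (Φ ∘ γ)))
    refine iInf_le_of_le (γ ∘ ρ) ?_
    refine iInf_le_of_le (hγ.continuousOn.comp (by fun_prop) hmaps) ?_
    refine iInf_le_of_le hfin ?_
    refine iInf_le_of_le (by simp [hρ, Function.comp]) ?_
    refine iInf_le_of_le (by simp [hρ, Function.comp]) ?_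
    exact le_of_eq rfl

/-- If `Z` is the metric quotient of `X` by `d_Φ` (i.e. `ψ : X → Z` is surjective with
`d_Z(ψx,ψy) = d_Φ(x,y)`) and `Φ = φ ∘ ψ`, then for every Lipschitz curve `γ` in `X`
the curve `α = ψ∘γ` satisfies `ℓ(α) = ℓ(φ∘α) = ℓ(Φ∘γ)`. -/
theorem stmt_10 {X Y Z : Type*} [MetricSpace X] [MetricSpace Y] [MetricSpace Z]
    (Cq L : NNReal) (hCq : 1 ≤ Cq) (hq : IsQuasiconvexSpace X Cq)
    (Φ : X → Y) (hΦ : LipschitzWith L Φ)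
    (ψ : X → Z) (φ : Z → Y) (hfactor : Φ = φ ∘ ψ) (hsurj : Function.Surjective ψ)
    (hquot : ∀ x y : X, edist (ψ x) (ψ y) = dPhi Φ x y)
    (K : NNReal) (γ : ℝ → X) (hγ : LipschitzOnWith K γ (Icc 0 1)) :
    eVariationOn (ψ ∘ γ) (Icc 0 1) = eVariationOn (φ ∘ (ψ ∘ γ)) (Icc 0 1) ∧
    eVariationOn (ψ ∘ γ) (Icc 0 1) = eVariationOn (Φ ∘ γ) (Icc 0 1) := by
  have hfg : φ ∘ (ψ ∘ γ) = Φ ∘ γ := by rw [hfactor]; rfl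
  suffices h : eVariationOn (ψ ∘ γ) (Icc 0 1) = eVariationOn (Φ ∘ γ) (Icc 0 1) by
    exact ⟨by rw [hfg]; exact h, h⟩
  apply le_antisymm
  · -- ℓ(ψ∘γ) ≤ ℓ(Φ∘γ)
    refine iSup_le ?_
    rintro ⟨n, u, hu, us⟩
    have key : ∀ i : ℕ, edist ((ψ ∘ γ) (u (i + 1))) ((ψ ∘ γ) (u i)) ≤
        eVariationOn (Φ ∘ γ) (Icc 0 1 ∩ Icc (u i) (u (i + 1))) := by
      intro i
      have h1 : edist ((ψ ∘ γ) (u (i + 1))) ((ψ ∘ γ) (u i)) =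
          dPhi Φ (γ (u i)) (γ (u (i + 1))) := by
        rw [edist_comm]; exact hquot _ _
      have h2 := dPhi_le_aux Φ hγ (us i) (us (i + 1)) (hu (Nat.le_succ i))
      have h3 : Icc 0 1 ∩ Icc (u i) (u (i + 1)) = Icc (u i) (u (i + 1)) :=
        inter_eq_self_of_subset_right (Icc_subset_Icc (us i).1 (us (i + 1)).2)
      rw [h1, h3]; exact h2
    have hsum : ∀ m : ℕ,
        ∑ i ∈ Finset.range m, eVariationOn (Φ ∘ γ) (Icc 0 1 ∩ Icc (u i) (u (i + 1))) ≤
        eVariationOn (Φ ∘ γ) (Icc 0 1 ∩ Icc (u 0) (u m)) := by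
      intro m
      induction m with
      | zero => simp
      | succ m ih =>
        rw [Finset.sum_range_succ]
        calc _ ≤ eVariationOn (Φ ∘ γ) (Icc 0 1 ∩ Icc (u 0) (u m)) +
              eVariationOn (Φ ∘ γ) (Icc 0 1 ∩ Icc (u m) (u (m + 1))) :=
            add_le_add_left ih _
          _ = eVariationOn (Φ ∘ γ) (Icc 0 1 ∩ Icc (u 0) (u (m + 1))) :=
            eVariationOn.Icc_add_Icc _ (hu (Nat.zero_le m)) (hu (Nat.le_succ m)) (us m)
    calc ∑ i ∈ Finset.range n, edist ((ψ ∘ γ) (u (i + 1))) ((ψ ∘ γ) (u i))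
        ≤ ∑ i ∈ Finset.range n, eVariationOn (Φ ∘ γ) (Icc 0 1 ∩ Icc (u i) (u (i + 1))) :=
          Finset.sum_le_sum fun i _ => key i
      _ ≤ eVariationOn (Φ ∘ γ) (Icc 0 1 ∩ Icc (u 0) (u n)) := hsum n
      _ ≤ eVariationOn (Φ ∘ γ) (Icc 0 1) := eVariationOn.mono _ inter_subset_left
  · -- ℓ(Φ∘γ) ≤ ℓ(ψ∘γ) via φ being 1-Lipschitz on range ψ
    have hφlip : LipschitzOnWith 1 φ (range ψ) := by
      intro z hz w hw
      obtain ⟨x, rfl⟩ := hz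
      obtain ⟨y, rfl⟩ := hw
      rw [ENNReal.coe_one, one_mul, hquot]
      have hEq : edist (φ (ψ x)) (φ (ψ y)) = edist (Φ x) (Φ y) := by rw [hfactor]; rfl
      rw [hEq, dPhi]
      refine le_iInf fun γ' => le_iInf fun hc => le_iInf fun hfin =>
        le_iInf fun h0 => le_iInf fun h1 => ?_
      rw [← h0, ← h1]
      exact eVariationOn.edist_le (Φ ∘ γ')
        (by constructor <;> norm_num) (by constructor <;> norm_num)
    have hle := hφlip.comp_eVariationOn_le (g := ψ ∘ γ) (s := Icc 0 1)
      (fun x _ => ⟨γ x, rfl⟩)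
    rw [ENNReal.coe_one, one_mul] at hle
    calc eVariationOn (Φ ∘ γ) (Icc 0 1) = eVariationOn (φ ∘ (ψ ∘ γ)) (Icc 0 1) := by rw [hfg]
      _ ≤ eVariationOn (ψ ∘ γ) (Icc 0 1) := hle
end

section
/- If X is a compact quasiconvex metric space and Φ : X → Y is Lipschitz, then the quotient space Z_Φ (with metric d_Φ) is a geodesic metric space. -/
open Set

open ENNReal NNReal Filter Topology

set_option linter.unusedSectionVars false

section Aux
variable {X Y : Type*} [MetricSpace X] [MetricSpace Y]

lemma dPhi_le (Φ : X → Y) {γ : ℝ → X} (h1 : ContinuousOn γ (Icc 0 1))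
    (h2 : eVariationOn γ (Icc 0 1) ≠ ⊤) {x y : X} (h3 : γ 0 = x) (h4 : γ 1 = y) :
    dPhi Φ x y ≤ eVariationOn (Φ ∘ γ) (Icc 0 1) :=
  iInf_le_of_le γ <| iInf_le_of_le h1 <| iInf_le_of_le h2 <| iInf_le_of_le h3 <|
    iInf_le_of_le h4 le_rfl

lemma exists_curve_of_dPhi_lt {Φ : X → Y} {x y : X} {c : ℝ≥0∞} (h : dPhi Φ x y < c) :
    ∃ γ : ℝ → X, ContinuousOn γ (Icc 0 1) ∧ eVariationOn γ (Icc 0 1) ≠ ⊤ ∧ γ 0 = x ∧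
      γ 1 = y ∧ eVariationOn (Φ ∘ γ) (Icc 0 1) < c := by
  simp only [dPhi, iInf_lt_iff] at h
  obtain ⟨γ, h1, h2, h3, h4, h5⟩ := h
  exact ⟨γ, h1, h2, h3, h4, h5⟩

lemma dPhi_segment (Φ : X → Y) {γ : ℝ → X} (h1 : ContinuousOn γ (Icc 0 1))
    (h2 : eVariationOn γ (Icc 0 1) ≠ ⊤) {u v : ℝ} (hu : 0 ≤ u) (huv : u ≤ v) (hv : v ≤ 1) :
    dPhi Φ (γ u) (γ v) ≤ eVariationOn (Φ ∘ γ) (Icc u v) := by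
  set A : ℝ → ℝ := fun s => u + s * (v - u) with hA
  have hsub : Icc u v ⊆ Icc (0:ℝ) 1 := Icc_subset_Icc hu hv
  have hmaps : MapsTo A (Icc 0 1) (Icc u v) := by
    rintro s ⟨h0, h1'⟩; constructor <;> simp only [hA] <;> nlinarith
  have hmono : MonotoneOn A (Icc 0 1) := by
    intro a _ b _ hab; simp only [hA]; nlinarith
  have hcont : ContinuousOn (γ ∘ A) (Icc 0 1) :=
    h1.comp (by fun_prop) (hmaps.mono_right hsub)
  have hvar : eVariationOn (γ ∘ A) (Icc 0 1) ≤ eVariationOn γ (Icc u v) :=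
    eVariationOn.comp_le_of_monotoneOn γ A hmono hmaps
  have hne : eVariationOn (γ ∘ A) (Icc 0 1) ≠ ⊤ :=
    (hvar.trans_lt ((eVariationOn.mono γ hsub).trans_lt (lt_top_iff_ne_top.2 h2))).ne
  have h0 : (γ ∘ A) 0 = γ u := congrArg γ (by simp [hA])
  have h1' : (γ ∘ A) 1 = γ v := congrArg γ (by simp [hA])
  calc dPhi Φ (γ u) (γ v) ≤ eVariationOn (Φ ∘ (γ ∘ A)) (Icc 0 1) :=
        dPhi_le Φ hcont hne h0 h1'
    _ = eVariationOn ((Φ ∘ γ) ∘ A) (Icc 0 1) := rfl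
    _ ≤ eVariationOn (Φ ∘ γ) (Icc u v) :=
        eVariationOn.comp_le_of_monotoneOn (Φ ∘ γ) A hmono hmaps

end Aux

/-- Dyadic subdivision points between `z₁` and `z₂` using a midpoint operation. -/
noncomputable def dyadicPt {Z : Type*} (mid : Z → Z → Z) (z₁ z₂ : Z) : ℕ → ℕ → Z
  | 0, k => if k = 0 then z₁ else z₂
  | (n+1), k =>
    if k % 2 = 0 then dyadicPt mid z₁ z₂ n (k / 2)
    else mid (dyadicPt mid z₁ z₂ n (k / 2)) (dyadicPt mid z₁ z₂ n (k / 2 + 1))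

section Dyadic

variable {Z : Type*} [MetricSpace Z] (mid : Z → Z → Z) (z₁ z₂ : Z)

lemma dyadicPt_zero (n : ℕ) : dyadicPt mid z₁ z₂ n 0 = z₁ := by
  induction n with
  | zero => simp [dyadicPt]
  | succ n ih => simp [dyadicPt, ih]

lemma dyadicPt_top (n : ℕ) : dyadicPt mid z₁ z₂ n (2 ^ n) = z₂ := by
  induction n with
  | zero => simp [dyadicPt]
  | succ n ih =>
    have h2 : 2 ^ (n + 1) % 2 = 0 := by simp [pow_succ, Nat.mul_mod_left]
    have h3 : 2 ^ (n + 1) / 2 = 2 ^ n := by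
      rw [pow_succ]; exact Nat.mul_div_cancel _ (by norm_num)
    simp [dyadicPt, h2, h3, ih]

lemma dyadicPt_even (n k : ℕ) : dyadicPt mid z₁ z₂ (n + 1) (2 * k) = dyadicPt mid z₁ z₂ n k := by
  simp [dyadicPt, Nat.mul_mod_right, Nat.mul_div_cancel_left _ (by norm_num : 0 < 2)]

variable {mid}

lemma dyadicPt_step
    (hm₁ : ∀ a b : Z, edist a (mid a b) ≤ edist a b / 2)
    (hm₂ : ∀ a b : Z, edist (mid a b) b ≤ edist a b / 2) :
    ∀ n k, edist (dyadicPt mid z₁ z₂ n k) (dyadicPt mid z₁ z₂ n (k + 1)) ≤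
      edist z₁ z₂ * 2⁻¹ ^ n := by
  intro n
  induction n with
  | zero =>
    intro k
    rcases Nat.eq_zero_or_pos k with rfl | hk
    · simp [dyadicPt]
    · have : k ≠ 0 := hk.ne'
      simp [dyadicPt, this]
  | succ n ih =>
    intro k
    have key : ∀ j : ℕ, edist (dyadicPt mid z₁ z₂ n j) (dyadicPt mid z₁ z₂ n (j + 1)) / 2 ≤
        edist z₁ z₂ * 2⁻¹ ^ (n + 1) := by
      intro j
      calc edist (dyadicPt mid z₁ z₂ n j) (dyadicPt mid z₁ z₂ n (j + 1)) / 2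
          ≤ (edist z₁ z₂ * 2⁻¹ ^ n) / 2 := by
            exact ENNReal.div_le_div_right (ih j) 2
        _ = edist z₁ z₂ * 2⁻¹ ^ (n + 1) := by
            rw [pow_succ, div_eq_mul_inv, mul_assoc]
    rcases Nat.even_or_odd k with ⟨j, hj⟩ | ⟨j, hj⟩
    · subst hj
      have e1 : dyadicPt mid z₁ z₂ (n + 1) (j + j) = dyadicPt mid z₁ z₂ n j := by
        rw [← two_mul, dyadicPt_even]
      have e2 : dyadicPt mid z₁ z₂ (n + 1) (j + j + 1) =
          mid (dyadicPt mid z₁ z₂ n j) (dyadicPt mid z₁ z₂ n (j + 1)) := by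
        have hmod : (j + j + 1) % 2 = 1 := by omega
        have hdiv : (j + j + 1) / 2 = j := by omega
        simp [dyadicPt, hmod, hdiv]
      rw [e1, e2]
      exact (hm₁ _ _).trans (key j)
    · subst hj
      have e1 : dyadicPt mid z₁ z₂ (n + 1) (2 * j + 1) =
          mid (dyadicPt mid z₁ z₂ n j) (dyadicPt mid z₁ z₂ n (j + 1)) := by
        have hmod : (2 * j + 1) % 2 = 1 := by omega
        have hdiv : (2 * j + 1) / 2 = j := by omega
        simp [dyadicPt, hmod, hdiv]
      have e2 : dyadicPt mid z₁ z₂ (n + 1) (2 * j + 1 + 1) = dyadicPt mid z₁ z₂ n (j + 1) := by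
        have : 2 * j + 1 + 1 = 2 * (j + 1) := by ring
        rw [this, dyadicPt_even]
      rw [e1, e2]
      exact (hm₂ _ _).trans (key j)

lemma dyadicPt_chain
    (hm₁ : ∀ a b : Z, edist a (mid a b) ≤ edist a b / 2)
    (hm₂ : ∀ a b : Z, edist (mid a b) b ≤ edist a b / 2)
    (n : ℕ) : ∀ j k, j ≤ k → edist (dyadicPt mid z₁ z₂ n j) (dyadicPt mid z₁ z₂ n k) ≤
      ((k - j : ℕ) : ℝ≥0∞) * (edist z₁ z₂ * 2⁻¹ ^ n) := by
  intro j k hjk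
  induction k, hjk using Nat.le_induction with
  | base => simp
  | succ k hjk ih =>
    calc edist (dyadicPt mid z₁ z₂ n j) (dyadicPt mid z₁ z₂ n (k + 1))
        ≤ edist (dyadicPt mid z₁ z₂ n j) (dyadicPt mid z₁ z₂ n k) +
          edist (dyadicPt mid z₁ z₂ n k) (dyadicPt mid z₁ z₂ n (k + 1)) := edist_triangle _ _ _
      _ ≤ ((k - j : ℕ) : ℝ≥0∞) * (edist z₁ z₂ * 2⁻¹ ^ n) +
          1 * (edist z₁ z₂ * 2⁻¹ ^ n) := by
          rw [one_mul]; exact add_le_add ih (dyadicPt_step z₁ z₂ hm₁ hm₂ n k)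
      _ = ((k - j : ℕ) + 1 : ℝ≥0∞) * (edist z₁ z₂ * 2⁻¹ ^ n) := by rw [← add_mul]
      _ = ((k + 1 - j : ℕ) : ℝ≥0∞) * (edist z₁ z₂ * 2⁻¹ ^ n) := by
          congr 1
          have : (k + 1 - j : ℕ) = (k - j) + 1 := by omega
          rw [this]; push_cast; ring

end Dyadic

lemma exists_geodesic {Z : Type*} [MetricSpace Z] [CompleteSpace Z]
    (mid : Z → Z → Z)
    (hm₁ : ∀ a b : Z, edist a (mid a b) ≤ edist a b / 2)
    (hm₂ : ∀ a b : Z, edist (mid a b) b ≤ edist a b / 2)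
    (z₁ z₂ : Z) :
    ∃ α : ℝ → Z, ContinuousOn α (Icc 0 1) ∧ α 0 = z₁ ∧ α 1 = z₂ ∧
      eVariationOn α (Icc 0 1) = edist z₁ z₂ := by
  haveI : Nonempty Z := ⟨z₁⟩
  set d := edist z₁ z₂ with hd
  have hdt : d ≠ ⊤ := edist_ne_top _ _
  set u : ℝ → ℕ → Z := fun t n => dyadicPt mid z₁ z₂ n ⌊t * 2 ^ n⌋₊ with hu
  have hfloor : ∀ (t : ℝ) (n : ℕ), 0 ≤ t →
      2 * ⌊t * 2 ^ n⌋₊ ≤ ⌊t * 2 ^ (n + 1)⌋₊ ∧ ⌊t * 2 ^ (n + 1)⌋₊ ≤ 2 * ⌊t * 2 ^ n⌋₊ + 1 := by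
    intro t n ht
    have h2n : (0 : ℝ) ≤ t * 2 ^ n := by positivity
    have hfl := Nat.floor_le h2n
    have hfl2 := Nat.lt_floor_add_one (t * 2 ^ n)
    constructor
    · apply Nat.le_floor
      push_cast
      calc (2 : ℝ) * ⌊t * 2 ^ n⌋₊ ≤ 2 * (t * 2 ^ n) := by nlinarith
        _ = t * 2 ^ (n + 1) := by ring
    · have hlt : t * 2 ^ (n + 1) < ((2 * ⌊t * 2 ^ n⌋₊ + 2 : ℕ) : ℝ) := by
        push_cast
        calc t * 2 ^ (n + 1) = 2 * (t * 2 ^ n) := by ring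
          _ < 2 * (⌊t * 2 ^ n⌋₊ + 1) := by nlinarith
          _ = 2 * ⌊t * 2 ^ n⌋₊ + 2 := by ring
      have := (Nat.floor_lt (by positivity)).2 hlt
      omega
  have hconsec : ∀ (t : ℝ), 0 ≤ t → ∀ n,
      edist (u t n) (u t (n + 1)) ≤ (d * 2⁻¹) * 2⁻¹ ^ n := by
    intro t ht n
    obtain ⟨hle, hlt⟩ := hfloor t n ht
    have e1 : u t n = dyadicPt mid z₁ z₂ (n + 1) (2 * ⌊t * 2 ^ n⌋₊) :=
      (dyadicPt_even mid z₁ z₂ n _).symm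
    have hchain := dyadicPt_chain z₁ z₂ hm₁ hm₂ (n + 1) (2 * ⌊t * 2 ^ n⌋₊)
      ⌊t * 2 ^ (n + 1)⌋₊ hle
    have hcast : ((⌊t * 2 ^ (n + 1)⌋₊ - 2 * ⌊t * 2 ^ n⌋₊ : ℕ) : ℝ≥0∞) ≤ 1 := by
      have h1 : (⌊t * 2 ^ (n + 1)⌋₊ - 2 * ⌊t * 2 ^ n⌋₊ : ℕ) ≤ 1 := by omega
      exact_mod_cast h1
    calc edist (u t n) (u t (n + 1))
        ≤ ((⌊t * 2 ^ (n + 1)⌋₊ - 2 * ⌊t * 2 ^ n⌋₊ : ℕ) : ℝ≥0∞) * (d * 2⁻¹ ^ (n + 1)) := by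
          rw [e1]; exact hchain
      _ ≤ 1 * (d * 2⁻¹ ^ (n + 1)) := mul_le_mul_left hcast _
      _ = (d * 2⁻¹) * 2⁻¹ ^ n := by rw [one_mul, pow_succ]; ring
  have hcauchy : ∀ t : ℝ, 0 ≤ t → CauchySeq (u t) := by
    intro t ht
    exact cauchySeq_of_edist_le_geometric 2⁻¹ (d * 2⁻¹)
      (ENNReal.inv_lt_one.mpr one_lt_two)
      (ENNReal.mul_ne_top hdt (by simp)) (hconsec t ht)
  set α : ℝ → Z := fun t => limUnder atTop (u t) with hα
  have htend : ∀ t : ℝ, 0 ≤ t → Tendsto (u t) atTop (𝓝 (α t)) :=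
    fun t ht => (hcauchy t ht).tendsto_limUnder
  have hα0 : α 0 = z₁ := by
    have hu0 : u 0 = fun _ => z₁ := by
      funext n; simp [hu, dyadicPt_zero]
    show limUnder atTop (u 0) = z₁
    rw [hu0]
    exact Filter.Tendsto.limUnder_eq tendsto_const_nhds
  have hα1 : α 1 = z₂ := by
    have hu1 : u 1 = fun _ => z₂ := by
      funext n
      show dyadicPt mid z₁ z₂ n ⌊(1 : ℝ) * 2 ^ n⌋₊ = z₂
      rw [one_mul, show ((2 : ℝ) ^ n) = ((2 ^ n : ℕ) : ℝ) by push_cast; ring,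
        Nat.floor_natCast]
      exact dyadicPt_top mid z₁ z₂ n
    show limUnder atTop (u 1) = z₂
    rw [hu1]
    exact Filter.Tendsto.limUnder_eq tendsto_const_nhds
  have hlip : ∀ s t : ℝ, 0 ≤ s → s ≤ t →
      edist (α s) (α t) ≤ d * ENNReal.ofReal (t - s) := by
    intro s t hs hst
    have ht : (0 : ℝ) ≤ t := hs.trans hst
    have hbound : ∀ n, edist (u s n) (u t n) ≤
        d * ENNReal.ofReal (t - s) + d * 2⁻¹ ^ n := by
      intro n
      have hab : ⌊s * 2 ^ n⌋₊ ≤ ⌊t * 2 ^ n⌋₊ :=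
        Nat.floor_le_floor (by nlinarith [pow_pos (by norm_num : (0:ℝ) < 2) n])
      have hchain := dyadicPt_chain z₁ z₂ hm₁ hm₂ n ⌊s * 2 ^ n⌋₊ ⌊t * 2 ^ n⌋₊ hab
      have hreal : ((⌊t * 2 ^ n⌋₊ - ⌊s * 2 ^ n⌋₊ : ℕ) : ℝ) ≤ (t - s) * 2 ^ n + 1 := by
        rw [Nat.cast_sub hab]
        have h1 : (⌊t * 2 ^ n⌋₊ : ℝ) ≤ t * 2 ^ n := Nat.floor_le (by positivity)
        have h2 : s * 2 ^ n < ⌊s * 2 ^ n⌋₊ + 1 := Nat.lt_floor_add_one _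
        nlinarith
      have hc : ((⌊t * 2 ^ n⌋₊ - ⌊s * 2 ^ n⌋₊ : ℕ) : ℝ≥0∞) ≤
          ENNReal.ofReal ((t - s) * 2 ^ n + 1) := by
        rw [← ENNReal.ofReal_natCast]
        exact ENNReal.ofReal_le_ofReal hreal
      have hcalc : ENNReal.ofReal ((t - s) * 2 ^ n + 1) * (d * 2⁻¹ ^ n) =
          d * ENNReal.ofReal (t - s) + d * 2⁻¹ ^ n := by
        rw [ENNReal.ofReal_add (by nlinarith [pow_pos (by norm_num : (0:ℝ) < 2) n]) zero_le_one,
          ENNReal.ofReal_mul (by linarith), ENNReal.ofReal_pow (by norm_num), ENNReal.ofReal_one,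
          ENNReal.ofReal_ofNat]
        have hcancel : (2 : ℝ≥0∞) ^ n * 2⁻¹ ^ n = 1 := by
          rw [← ENNReal.inv_pow]
          exact ENNReal.mul_inv_cancel (by positivity) (by simp)
        calc (ENNReal.ofReal (t - s) * 2 ^ n + 1) * (d * 2⁻¹ ^ n)
            = d * ENNReal.ofReal (t - s) * (2 ^ n * 2⁻¹ ^ n) + d * 2⁻¹ ^ n := by ring
          _ = d * ENNReal.ofReal (t - s) + d * 2⁻¹ ^ n := by rw [hcancel, mul_one]
      calc edist (u s n) (u t n)
          ≤ ((⌊t * 2 ^ n⌋₊ - ⌊s * 2 ^ n⌋₊ : ℕ) : ℝ≥0∞) * (d * 2⁻¹ ^ n) := hchain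
        _ ≤ ENNReal.ofReal ((t - s) * 2 ^ n + 1) * (d * 2⁻¹ ^ n) := mul_le_mul_left hc _
        _ = d * ENNReal.ofReal (t - s) + d * 2⁻¹ ^ n := hcalc
    have htendB : Tendsto (fun n : ℕ => d * ENNReal.ofReal (t - s) + d * 2⁻¹ ^ n) atTop
        (𝓝 (d * ENNReal.ofReal (t - s))) := by
      have h0 : Tendsto (fun n : ℕ => d * 2⁻¹ ^ n) atTop (𝓝 0) := by
        have := ENNReal.Tendsto.const_mul
          (ENNReal.tendsto_pow_atTop_nhds_zero_of_lt_one (ENNReal.inv_lt_one.mpr one_lt_two))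
          (Or.inr hdt) (a := d)
        simpa using this
      simpa using tendsto_const_nhds.add h0
    exact le_of_tendsto_of_tendsto' ((htend s hs).edist (htend t ht)) htendB hbound
  have hlipOn : LipschitzOnWith d.toNNReal α (Icc 0 1) := by
    intro s hs t ht
    have key : ∀ a b : ℝ, a ∈ Icc (0:ℝ) 1 → b ∈ Icc (0:ℝ) 1 → a ≤ b →
        edist (α a) (α b) ≤ d.toNNReal * edist a b := by
      intro a b ha hb hab
      have : edist a b = ENNReal.ofReal (b - a) := by
        rw [edist_dist, Real.dist_eq, abs_of_nonpos (by linarith)]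
        congr 1; ring
      rw [this, ENNReal.coe_toNNReal hdt]
      exact hlip a b ha.1 hab
    rcases le_total s t with h | h
    · exact key s t hs ht h
    · rw [edist_comm, edist_comm s t]
      exact key t s ht hs h
  refine ⟨α, hlipOn.continuousOn, hα0, hα1, le_antisymm ?_ ?_⟩
  · have hid : eVariationOn (id : ℝ → ℝ) (Icc 0 1) ≤ 1 := by
      have hmono : MonotoneOn (id : ℝ → ℝ) (Icc 0 1) := fun a _ b _ h => h
      have := hmono.eVariationOn_le (a := 0) (b := 1)
        ⟨le_rfl, zero_le_one⟩ ⟨zero_le_one, le_rfl⟩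
      simpa using this
    have := hlipOn.comp_eVariationOn_le (mapsTo_id (Icc (0:ℝ) 1))
    rw [Function.comp_id] at this
    calc eVariationOn α (Icc 0 1) ≤ d.toNNReal * eVariationOn (id : ℝ → ℝ) (Icc 0 1) := this
      _ ≤ d.toNNReal * 1 := mul_le_mul_right hid _
      _ = d := by rw [mul_one, ENNReal.coe_toNNReal hdt]
  · have h0m : (0:ℝ) ∈ Icc (0:ℝ) 1 := ⟨le_rfl, zero_le_one⟩
    have h1m : (1:ℝ) ∈ Icc (0:ℝ) 1 := ⟨zero_le_one, le_rfl⟩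
    have := eVariationOn.edist_le α h0m h1m
    rwa [hα0, hα1] at this

lemma exists_midpoint {Z : Type*} [MetricSpace Z] [CompactSpace Z]
    (happ : ∀ (z₁ z₂ : Z) (ε : ℝ≥0∞), 0 < ε → ε ≠ ⊤ →
      ∃ m, edist z₁ m ≤ edist z₁ z₂ / 2 + ε ∧ edist m z₂ ≤ edist z₁ z₂ / 2 + ε)
    (z₁ z₂ : Z) :
    ∃ m, edist z₁ m ≤ edist z₁ z₂ / 2 ∧ edist m z₂ ≤ edist z₁ z₂ / 2 := by
  have hpow : ∀ j : ℕ, (0 : ℝ≥0∞) < 2⁻¹ ^ j ∧ (2⁻¹ : ℝ≥0∞) ^ j ≠ ⊤ := by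
    intro j
    constructor
    · exact ENNReal.pow_pos (by simp) j
    · exact ENNReal.pow_ne_top (by simp)
  choose m hm₁ hm₂ using fun j : ℕ => happ z₁ z₂ (2⁻¹ ^ j) (hpow j).1 (hpow j).2
  obtain ⟨a, -, φ, hφ, hφa⟩ := isCompact_univ.tendsto_subseq (fun j => mem_univ (m j))
  have hpowt : Tendsto (fun j : ℕ => edist z₁ z₂ / 2 + 2⁻¹ ^ φ j) atTop
      (𝓝 (edist z₁ z₂ / 2)) := by
    have h0 : Tendsto (fun j : ℕ => (2⁻¹ : ℝ≥0∞) ^ φ j) atTop (𝓝 0) :=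
      (ENNReal.tendsto_pow_atTop_nhds_zero_of_lt_one
        (ENNReal.inv_lt_one.mpr one_lt_two)).comp hφ.tendsto_atTop
    simpa using tendsto_const_nhds.add h0
  refine ⟨a, ?_, ?_⟩
  · exact le_of_tendsto_of_tendsto' (tendsto_const_nhds.edist hφa) hpowt
      (fun j => hm₁ (φ j))
  · exact le_of_tendsto_of_tendsto' (hφa.edist tendsto_const_nhds) hpowt
      (fun j => hm₂ (φ j))

lemma exists_approx_midpoint {X Y Z : Type*} [MetricSpace X] [MetricSpace Y] [MetricSpace Z]
    (Φ : X → Y) (ψ : X → Z) (hsurj : Function.Surjective ψ)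
    (hquot : ∀ x y : X, edist (ψ x) (ψ y) = dPhi Φ x y)
    (hψcont : Continuous ψ)
    (z₁ z₂ : Z) (ε : ℝ≥0∞) (hε : 0 < ε) (hεt : ε ≠ ⊤) :
    ∃ m, edist z₁ m ≤ edist z₁ z₂ / 2 + ε ∧ edist m z₂ ≤ edist z₁ z₂ / 2 + ε := by
  classical
  obtain ⟨x, rfl⟩ := hsurj z₁
  obtain ⟨y, rfl⟩ := hsurj z₂
  set d := edist (ψ x) (ψ y) with hd
  have hdt : d ≠ ⊤ := edist_ne_top _ _
  set ε' := ε / 2 with hε'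
  have hε'pos : 0 < ε' := ENNReal.div_pos hε.ne' (by norm_num)
  have hε't : ε' ≠ ⊤ := (ENNReal.div_lt_top hεt (by norm_num)).ne
  have hlt : dPhi Φ x y < d + ε' := by
    rw [← hquot]
    exact ENNReal.lt_add_right (by rw [hquot]; exact hquot x y ▸ hdt) hε'pos.ne'
  obtain ⟨γ, h1, h2, h3, h4, h5⟩ := exists_curve_of_dPhi_lt hlt
  set ℓ := eVariationOn (Φ ∘ γ) (Icc 0 1) with hℓ
  have hℓt : ℓ ≠ ⊤ := h5.ne_top
  have hℓ2t : ℓ / 2 ≠ ⊤ := (ENNReal.div_lt_top hℓt (by norm_num)).ne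
  -- the key edist bound along the curve
  have hseg : ∀ u v : ℝ, 0 ≤ u → u ≤ v → v ≤ 1 →
      edist (ψ (γ u)) (ψ (γ v)) ≤ eVariationOn (Φ ∘ γ) (Icc u v) := by
    intro u v hu huv hv
    rw [hquot]
    exact dPhi_segment Φ h1 h2 hu huv hv
  -- uniform continuity gives a fine partition
  have hcont : ContinuousOn (ψ ∘ γ) (Icc 0 1) := hψcont.comp_continuousOn h1
  have huc := isCompact_Icc.uniformContinuousOn_of_continuous hcont
  rw [EMetric.uniformContinuousOn_iff] at huc
  obtain ⟨δ, hδ, hδ'⟩ := huc ε' hε'pos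
  obtain ⟨n, hn⟩ := ENNReal.exists_inv_nat_lt hδ.ne'
  have hn0 : 0 < n := by
    rcases Nat.eq_zero_or_pos n with rfl | h
    · simp at hn
    · exact h
  have hnR : (0 : ℝ) < n := by exact_mod_cast hn0
  -- partition points
  have hmem : ∀ i : ℕ, i ≤ n → ((i : ℝ) / n) ∈ Icc (0:ℝ) 1 := by
    intro i hi
    constructor
    · positivity
    · rw [div_le_one hnR]; exact_mod_cast hi
  set a : ℕ → ℝ≥0∞ := fun i => edist (ψ (γ ((i:ℝ) / n))) (ψ (γ (((i:ℝ) + 1) / n))) with ha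
  have hstep : ∀ i : ℕ, i < n → a i < ε' := by
    intro i hi
    apply hδ' (hmem i hi.le) (by exact_mod_cast hmem (i+1) hi)
    have : edist ((i:ℝ) / n) (((i:ℝ) + 1) / n) = ENNReal.ofReal (1 / n) := by
      rw [edist_dist, Real.dist_eq]
      congr 1
      rw [abs_of_nonpos (by rw [sub_nonpos]; gcongr; linarith)]
      field_simp
      ring
    rw [this]
    calc ENNReal.ofReal (1 / n) = ((n : ℝ≥0∞))⁻¹ := by
          rw [one_div, ← ENNReal.ofReal_natCast n, ← ENNReal.ofReal_inv_of_pos hnR]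
      _ < δ := hn
  -- sums of consecutive distances are bounded by variation
  have hsum : ∀ j k : ℕ, j ≤ k → k ≤ n →
      (∑ i ∈ Finset.Ico j k, a i) ≤ eVariationOn (Φ ∘ γ) (Icc ((j:ℝ)/n) ((k:ℝ)/n)) := by
    intro j k hjk
    induction k, hjk using Nat.le_induction with
    | base => intro _; simp
    | succ k hjk ih =>
      intro hk1
      have hk : k ≤ n := by omega
      have hjkR : (j:ℝ)/n ≤ (k:ℝ)/n := by gcongr <;> exact_mod_cast hjk
      have hkk1 : (k:ℝ)/n ≤ ((k:ℝ)+1)/n := by gcongr; linarith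
      have hcomb := eVariationOn.Icc_add_Icc (Φ ∘ γ) (s := univ) hjkR hkk1 (mem_univ _)
      simp only [univ_inter] at hcomb
      have hak : a k ≤ eVariationOn (Φ ∘ γ) (Icc ((k:ℝ)/n) (((k:ℝ)+1)/n)) :=
        hseg _ _ (by positivity) hkk1 (by
          rw [div_le_one hnR]; exact_mod_cast hk1)
      rw [Finset.sum_Ico_succ_top hjk]
      calc (∑ i ∈ Finset.Ico j k, a i) + a k
          ≤ eVariationOn (Φ ∘ γ) (Icc ((j:ℝ)/n) ((k:ℝ)/n)) +
            eVariationOn (Φ ∘ γ) (Icc ((k:ℝ)/n) (((k:ℝ)+1)/n)) :=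
            add_le_add (ih hk) hak
        _ = eVariationOn (Φ ∘ γ) (Icc ((j:ℝ)/n) (((k:ℝ)+1)/n)) := hcomb
        _ = eVariationOn (Φ ∘ γ) (Icc ((j:ℝ)/n) (((k+1:ℕ):ℝ)/n)) := by norm_cast
  have htotal : (∑ i ∈ Finset.range n, a i) ≤ ℓ := by
    have := hsum 0 n (Nat.zero_le n) le_rfl
    rw [Finset.range_eq_Ico]
    simpa [div_self hnR.ne'] using this
  -- triangle inequality along the chain
  have hchainZ : ∀ j k : ℕ, j ≤ k →
      edist (ψ (γ ((j:ℝ)/n))) (ψ (γ ((k:ℝ)/n))) ≤ ∑ i ∈ Finset.Ico j k, a i := by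
    intro j k hjk
    induction k, hjk using Nat.le_induction with
    | base => simp
    | succ k hjk ih =>
      rw [Finset.sum_Ico_succ_top hjk]
      calc edist (ψ (γ ((j:ℝ)/n))) (ψ (γ (((k+1:ℕ):ℝ)/n)))
          ≤ edist (ψ (γ ((j:ℝ)/n))) (ψ (γ ((k:ℝ)/n))) +
            edist (ψ (γ ((k:ℝ)/n))) (ψ (γ (((k+1:ℕ):ℝ)/n))) := edist_triangle _ _ _
        _ ≤ (∑ i ∈ Finset.Ico j k, a i) + a k := by
            refine add_le_add ih ?_
            have : (((k+1:ℕ):ℝ)/n) = (((k:ℝ)+1)/n) := by push_cast; ring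
            rw [this]
  -- choose the splitting index
  set S : ℕ → ℝ≥0∞ := fun j => ∑ i ∈ Finset.range j, a i with hS
  set k₀ := Nat.findGreatest (fun j => S j ≤ ℓ / 2) n with hk₀def
  have hk₀ : S k₀ ≤ ℓ / 2 :=
    Nat.findGreatest_spec (P := fun j => S j ≤ ℓ / 2) (Nat.zero_le n) (by simp [hS])
  have hk₀n : k₀ ≤ n := Nat.findGreatest_le n
  refine ⟨ψ (γ ((k₀:ℝ)/n)), ?_, ?_⟩
  · -- distance from z₁
    have hch := hchainZ 0 k₀ (Nat.zero_le _)
    have : edist (ψ x) (ψ (γ ((k₀:ℝ)/n))) ≤ S k₀ := by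
      have e0 : ((0:ℕ):ℝ)/n = (0:ℝ) := by simp
      rw [← h3]
      calc edist (ψ (γ 0)) (ψ (γ ((k₀:ℝ)/n)))
          = edist (ψ (γ (((0:ℕ):ℝ)/n))) (ψ (γ ((k₀:ℝ)/n))) := by rw [e0]
        _ ≤ ∑ i ∈ Finset.Ico 0 k₀, a i := hch
        _ = S k₀ := by simp only [hS, Finset.range_eq_Ico]
    calc edist (ψ x) (ψ (γ ((k₀:ℝ)/n))) ≤ S k₀ := this
      _ ≤ ℓ / 2 := hk₀
      _ ≤ (d + ε') / 2 := ENNReal.div_le_div_right h5.le 2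
      _ = d / 2 + ε' / 2 := by rw [ENNReal.add_div]
      _ ≤ d / 2 + ε := by
          gcongr
          calc ε' / 2 ≤ ε' := ENNReal.half_le_self
            _ ≤ ε := by rw [hε']; exact ENNReal.half_le_self
  · -- distance to z₂
    have hyn : ψ y = ψ (γ ((n:ℝ)/n)) := by
      rw [div_self hnR.ne', h4]
    rcases eq_or_lt_of_le hk₀n with heq | hk₀lt
    · rw [heq, ← hyn, edist_self]
      exact zero_le
    · have hfail : ¬ (S (k₀ + 1) ≤ ℓ / 2) :=
        Nat.findGreatest_is_greatest (lt_add_one k₀) hk₀lt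
      have hS2 : ℓ / 2 < S (k₀ + 1) := lt_of_not_ge hfail
      have hsplit : S (k₀ + 1) + (∑ i ∈ Finset.Ico (k₀ + 1) n, a i) = S n := by
        simp only [hS, Finset.range_eq_Ico]
        exact Finset.sum_Ico_consecutive _ (Nat.zero_le _) hk₀lt
      have htail : (∑ i ∈ Finset.Ico (k₀ + 1) n, a i) ≤ ℓ / 2 := by
        have h1' : ℓ / 2 + (∑ i ∈ Finset.Ico (k₀ + 1) n, a i) ≤ ℓ / 2 + ℓ / 2 := by
          calc ℓ / 2 + (∑ i ∈ Finset.Ico (k₀ + 1) n, a i)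
              ≤ S (k₀ + 1) + (∑ i ∈ Finset.Ico (k₀ + 1) n, a i) := by exact add_le_add_left hS2.le _
            _ = S n := hsplit
            _ ≤ ℓ := by simpa [hS] using htotal
            _ = ℓ / 2 + ℓ / 2 := (ENNReal.add_halves ℓ).symm
        exact (ENNReal.add_le_add_iff_left hℓ2t).1 h1'
      have hch := hchainZ k₀ n hk₀n
      have hlow : ∑ i ∈ Finset.Ico k₀ n, a i ≤ ε' + ℓ / 2 := by
        rw [Finset.sum_eq_sum_Ico_succ_bot hk₀lt]
        exact add_le_add (hstep k₀ hk₀lt).le htail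
      rw [hyn]
      calc edist (ψ (γ ((k₀:ℝ)/n))) (ψ (γ ((n:ℝ)/n))) ≤ ∑ i ∈ Finset.Ico k₀ n, a i := hch
        _ ≤ ε' + ℓ / 2 := hlow
        _ ≤ ε' + (d / 2 + ε' / 2) := by
            gcongr
            calc ℓ / 2 ≤ (d + ε') / 2 := ENNReal.div_le_div_right h5.le 2
              _ = d / 2 + ε' / 2 := by rw [ENNReal.add_div]
        _ = d / 2 + (ε' + ε' / 2) := by ring
        _ ≤ d / 2 + (ε' + ε') := by gcongr; exact ENNReal.half_le_self
        _ = d / 2 + ε := by rw [hε', ENNReal.add_halves]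

/-- If `X` is a compact quasiconvex metric space, `Φ : X → Y` Lipschitz, and `Z` is the
metric quotient of `X` by `d_Φ`, then `Z` is a geodesic metric space. -/
theorem stmt_11 {X Y Z : Type*} [MetricSpace X] [MetricSpace Y] [MetricSpace Z]
    [CompactSpace X] (Cq L : NNReal) (hCq : 1 ≤ Cq) (hq : IsQuasiconvexSpace X Cq)
    (Φ : X → Y) (hΦ : LipschitzWith L Φ)
    (ψ : X → Z) (hsurj : Function.Surjective ψ)
    (hquot : ∀ x y : X, edist (ψ x) (ψ y) = dPhi Φ x y) :
    ∀ z₁ z₂ : Z, ∃ α : ℝ → Z, ContinuousOn α (Icc 0 1) ∧ α 0 = z₁ ∧ α 1 = z₂ ∧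
      eVariationOn α (Icc 0 1) = edist z₁ z₂ := by
  have hψe : ∀ x y : X, edist (ψ x) (ψ y) ≤ ((L * Cq : ℝ≥0) : ℝ≥0∞) * edist x y := by
    intro x y
    obtain ⟨γ, hγc, hγ0, hγ1, hγv⟩ := hq x y
    have hfin : (Cq : ℝ≥0∞) * edist x y ≠ ⊤ :=
      ENNReal.mul_ne_top ENNReal.coe_ne_top (edist_ne_top x y)
    have hne : eVariationOn γ (Icc 0 1) ≠ ⊤ :=
      (hγv.trans_lt (lt_top_iff_ne_top.2 hfin)).ne
    rw [hquot]
    calc dPhi Φ x y ≤ eVariationOn (Φ ∘ γ) (Icc 0 1) := dPhi_le Φ hγc hne hγ0 hγ1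
      _ ≤ (L : ℝ≥0∞) * eVariationOn γ (Icc 0 1) :=
          hΦ.lipschitzOnWith.comp_eVariationOn_le (mapsTo_univ γ _)
      _ ≤ (L : ℝ≥0∞) * ((Cq : ℝ≥0∞) * edist x y) := mul_le_mul_right hγv _
      _ = ((L * Cq : ℝ≥0) : ℝ≥0∞) * edist x y := by rw [ENNReal.coe_mul, mul_assoc]
  have hψlip : LipschitzWith (L * Cq) ψ := fun x y => hψe x y
  haveI : CompactSpace Z := ⟨by
    rw [← hsurj.range_eq]
    exact isCompact_range hψlip.continuous⟩
  haveI : CompleteSpace Z := complete_of_compact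
  have hmid := exists_midpoint
    (fun z₁ z₂ ε hε hεt => exists_approx_midpoint Φ ψ hsurj hquot hψlip.continuous z₁ z₂ ε hε hεt)
  choose mid hm₁ hm₂ using hmid
  exact exists_geodesic mid hm₁ hm₂
end

section
/- Let F : [0,1]^{n+m} → ℝⁿ be Lipschitz with n ≥ 1, m ≥ 0, and E ⊆ [0,1]^{n+m} measurable. If Ĥ^{n,m}_∞(F,E) = 0, then rank DF(x) ≤ n−1 for Lebesgue-almost all x ∈ E. -/
open Set MeasureTheory

/-- Hausdorff content `H^n_∞` (with the standard normalization `ω_n (diam/2)^n`). -/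
noncomputable def hContent {X : Type*} [EMetricSpace X] (n : ℕ) (E : Set X) : ENNReal :=
  ⨅ (A : ℕ → Set X) (_ : E ⊆ ⋃ i, A i),
    ∑' i, volume (Metric.ball (0 : EuclideanSpace ℝ (Fin n)) 1) / 2 ^ n *
      (EMetric.diam (A i)) ^ n

/-- The mapping content `Ĥ^{n,m}_∞(F,E)`: infimum of `∑ H^n_∞(F(Aᵢ)) (diam Aᵢ)^m` over
coverings of `E` by arbitrary sets `Aᵢ ⊆ Q₀`. -/
noncomputable def mapContent {X Y : Type*} [EMetricSpace X] [EMetricSpace Y]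
    (n m : ℕ) (Q₀ : Set X) (F : X → Y) (E : Set X) : ENNReal :=
  ⨅ (A : ℕ → Set X) (_ : E ⊆ ⋃ i, A i) (_ : ∀ i, A i ⊆ Q₀),
    ∑' i, hContent n (F '' A i) * (EMetric.diam (A i)) ^ m

/-- The unit cube `[0,1]^d`. -/
def unitCube (d : ℕ) : Set (EuclideanSpace ℝ (Fin d)) := {x | ∀ i, x i ∈ Icc (0:ℝ) 1}

open Module
open scoped ENNReal NNReal

namespace Stmt12

noncomputable def ballVol (k : ℕ) : ℝ≥0∞ :=
  volume (Metric.ball (0 : EuclideanSpace ℝ (Fin k)) 1)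

lemma ballVol_ne_zero (k : ℕ) : ballVol k ≠ 0 :=
  (Metric.measure_ball_pos volume _ one_pos).ne'

lemma volume_le_ediam_pow (k : ℕ) (s : Set (EuclideanSpace ℝ (Fin k))) :
    volume s ≤ ballVol k * EMetric.diam s ^ k := by
  rcases Nat.eq_zero_or_pos k with hk | hk
  · subst hk
    have hball : Metric.ball (0 : EuclideanSpace ℝ (Fin 0)) 1 = univ := by
      ext x
      simp [Metric.mem_ball, Subsingleton.elim x 0]
    rw [pow_zero, mul_one, ballVol, hball]
    exact measure_mono (subset_univ s)
  haveI : Nonempty (Fin k) := ⟨⟨0, hk⟩⟩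
  rcases eq_empty_or_nonempty s with rfl | ⟨x₀, hx₀⟩
  · simp
  rcases eq_or_ne (EMetric.diam s) ⊤ with hdiam | hdiam
  · rw [hdiam, ENNReal.top_pow hk.ne', ENNReal.mul_top (ballVol_ne_zero k)]
    exact le_top
  · have hsub : s ⊆ Metric.closedBall x₀ (EMetric.diam s).toReal := by
      intro y hy
      rw [Metric.mem_closedBall, dist_edist]
      exact ENNReal.toReal_mono hdiam (EMetric.edist_le_diam_of_mem hy hx₀)
    calc volume s ≤ volume (Metric.closedBall x₀ (EMetric.diam s).toReal) :=
          measure_mono hsub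
      _ = (ENNReal.ofReal (EMetric.diam s).toReal) ^ Fintype.card (Fin k) *
          ENNReal.ofReal (Real.sqrt Real.pi ^ Fintype.card (Fin k) /
            Real.Gamma (Fintype.card (Fin k) / 2 + 1)) := EuclideanSpace.volume_closedBall _ _ _
      _ = ballVol k * EMetric.diam s ^ k := by
          rw [ENNReal.ofReal_toReal hdiam, ballVol, EuclideanSpace.volume_ball]
          simp [Fintype.card_fin, mul_comm]

lemma volume_le_hContent {k : ℕ} (hk : 1 ≤ k) (s : Set (EuclideanSpace ℝ (Fin k))) :
    volume s ≤ 2 ^ k * hContent k s := by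
  have h20 : (2 : ℝ≥0∞) ^ k ≠ 0 := by positivity
  have h2t : (2 : ℝ≥0∞) ^ k ≠ ⊤ := by
    exact ENNReal.pow_ne_top (by norm_num)
  have key : ∀ (A : ℕ → Set (EuclideanSpace ℝ (Fin k))), s ⊆ ⋃ i, A i →
      volume s ≤ 2 ^ k * ∑' i, ballVol k / 2 ^ k * EMetric.diam (A i) ^ k := by
    intro A hA
    calc volume s ≤ volume (⋃ i, A i) := measure_mono hA
      _ ≤ ∑' i, volume (A i) := measure_iUnion_le A
      _ ≤ ∑' i, ballVol k * EMetric.diam (A i) ^ k :=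
          ENNReal.tsum_le_tsum fun i => volume_le_ediam_pow k (A i)
      _ = ∑' i, 2 ^ k * (ballVol k / 2 ^ k * EMetric.diam (A i) ^ k) := by
          congr 1; funext i
          rw [← mul_assoc, ENNReal.mul_div_cancel h20 h2t]
      _ = 2 ^ k * ∑' i, ballVol k / 2 ^ k * EMetric.diam (A i) ^ k := ENNReal.tsum_mul_left
  have : volume s / 2 ^ k ≤ hContent k s := by
    refine le_iInf₂ fun A hA => ?_
    rw [ENNReal.div_le_iff h20 h2t, mul_comm]
    exact key A hA
  calc volume s = 2 ^ k * (volume s / 2 ^ k) := (ENNReal.mul_div_cancel h20 h2t).symm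
    _ ≤ 2 ^ k * hContent k s := mul_le_mul_right this _

lemma hausdorff_le_of_expand {A B : Type*} [MetricSpace A] [MetricSpace B]
    [MeasurableSpace A] [BorelSpace A] [MeasurableSpace B] [BorelSpace B] [Nonempty A]
    (f : A → B) (S : Set A) (c : ℝ≥0) (hc : 0 < c)
    (hf : ∀ x ∈ S, ∀ y ∈ S, (c : ℝ) * dist x y ≤ dist (f x) (f y)) (d : ℕ) :
    μH[d] S ≤ ((c⁻¹ : ℝ≥0) : ℝ≥0∞) ^ d * μH[d] (f '' S) := by
  have hcR : (0 : ℝ) < (c : ℝ) := hc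
  set g := Function.invFunOn f S with hg
  have hmem : ∀ u ∈ f '' S, g u ∈ S ∧ f (g u) = u := by
    intro u hu
    obtain ⟨a, ha, rfl⟩ := hu
    exact ⟨Function.invFunOn_mem ⟨a, ha, rfl⟩, Function.invFunOn_eq ⟨a, ha, rfl⟩⟩
  have hinj : Set.InjOn f S := by
    intro x hx y hy hxy
    have h := hf x hx y hy
    rw [hxy, dist_self] at h
    have hd0 : dist x y = 0 := by nlinarith [dist_nonneg (x := x) (y := y)]
    exact dist_eq_zero.mp hd0
  have hlip : LipschitzOnWith c⁻¹ g (f '' S) := by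
    apply LipschitzOnWith.of_dist_le_mul
    intro u hu v hv
    obtain ⟨hguS, hgu⟩ := hmem u hu
    obtain ⟨hgvS, hgv⟩ := hmem v hv
    have h := hf (g u) hguS (g v) hgvS
    rw [hgu, hgv] at h
    rw [NNReal.coe_inv, inv_mul_eq_div, le_div_iff₀ hcR]
    linarith
  have hSsub : S ⊆ g '' (f '' S) := fun x hx =>
    ⟨f x, mem_image_of_mem f hx, hinj.leftInvOn_invFunOn hx⟩
  calc μH[(d : ℝ)] S ≤ μH[(d : ℝ)] (g '' (f '' S)) := measure_mono hSsub
    _ ≤ ((c⁻¹ : ℝ≥0) : ℝ≥0∞) ^ (d : ℝ) * μH[(d : ℝ)] (f '' S) :=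
        hlip.hausdorffMeasure_image_le (Nat.cast_nonneg d)
    _ = ((c⁻¹ : ℝ≥0) : ℝ≥0∞) ^ d * μH[(d : ℝ)] (f '' S) := by
        rw [ENNReal.rpow_natCast]

lemma ediam_unitCube_ne_top (d : ℕ) : EMetric.diam (unitCube d) ≠ ⊤ := by
  have hsub : unitCube d ⊆ Metric.closedBall 0 ((d : ℝ) + 1) := by
    intro x hx
    rw [Metric.mem_closedBall, dist_zero_right]
    have h1 : ‖x‖ = Real.sqrt (∑ i, ‖x i‖ ^ 2) := EuclideanSpace.norm_eq x
    have h2 : (∑ i, ‖x i‖ ^ 2) ≤ (d : ℝ) := by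
      calc (∑ i, ‖x i‖ ^ 2) ≤ ∑ _i : Fin d, (1 : ℝ) := by
            apply Finset.sum_le_sum
            intro i _
            have := hx i
            have h01 : (0:ℝ) ≤ x i := this.1
            have h11 : x i ≤ 1 := this.2
            rw [Real.norm_eq_abs, abs_of_nonneg h01]
            nlinarith
        _ = (d : ℝ) := by simp
    calc ‖x‖ ≤ Real.sqrt (d : ℝ) := by rw [h1]; exact Real.sqrt_le_sqrt h2
      _ ≤ (d : ℝ) + 1 := by
          rw [show ((d:ℝ) + 1) = Real.sqrt (((d:ℝ)+1)^2) by
            rw [Real.sqrt_sq (by positivity)]]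
          apply Real.sqrt_le_sqrt
          nlinarith [Nat.cast_nonneg (α := ℝ) d]
  exact ((Metric.isBounded_closedBall).subset hsub).ediam_ne_top

def Piece (n m : ℕ) (F : EuclideanSpace ℝ (Fin (n + m)) → EuclideanSpace ℝ (Fin n))
    (E : Set (EuclideanSpace ℝ (Fin (n + m))))
    (D₀ : EuclideanSpace ℝ (Fin (n + m)) →L[ℝ] EuclideanSpace ℝ (Fin n))
    (Q₀ : EuclideanSpace ℝ (Fin (n + m)) →L[ℝ] EuclideanSpace ℝ (Fin m))
    (ρ : ℚ) (j : ℕ) (w : EuclideanSpace ℝ (Fin (n + m))) :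
    Set (EuclideanSpace ℝ (Fin (n + m))) :=
  {x | x ∈ E ∧ 0 < ρ ∧ (∀ v, 3 * (ρ : ℝ) * ‖v‖ ≤ max ‖D₀ v‖ ‖Q₀ v‖) ∧
    dist x w < 1 / (3 * ((j : ℝ) + 1)) ∧
    ∃ D : EuclideanSpace ℝ (Fin (n + m)) →L[ℝ] EuclideanSpace ℝ (Fin n),
      HasFDerivAt F D x ∧ ‖D - D₀‖ ≤ (ρ : ℝ) ∧
      ∀ y, dist y x ≤ 1 / ((j : ℝ) + 1) → ‖F y - F x - D (y - x)‖ ≤ (ρ : ℝ) * dist y x}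

lemma piece_expand {n m : ℕ} {F : EuclideanSpace ℝ (Fin (n + m)) → EuclideanSpace ℝ (Fin n)}
    {E : Set (EuclideanSpace ℝ (Fin (n + m)))}
    {D₀ : EuclideanSpace ℝ (Fin (n + m)) →L[ℝ] EuclideanSpace ℝ (Fin n)}
    {Q₀ : EuclideanSpace ℝ (Fin (n + m)) →L[ℝ] EuclideanSpace ℝ (Fin m)}
    {ρ : ℚ} {j : ℕ} {w : EuclideanSpace ℝ (Fin (n + m))}
    {x y : EuclideanSpace ℝ (Fin (n + m))}
    (hx : x ∈ Piece n m F E D₀ Q₀ ρ j w) (hy : y ∈ Piece n m F E D₀ Q₀ ρ j w) :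
    (ρ : ℝ) * dist x y ≤ dist (F x, Q₀ x) (F y, Q₀ y) := by
  obtain ⟨-, hρ, hlow, hxw, D, hD, hDD₀, happrox⟩ := hx
  obtain ⟨-, -, -, hyw, -⟩ := hy
  have hj : (0 : ℝ) < (j : ℝ) + 1 := by positivity
  have hdxy : dist y x ≤ 1 / ((j : ℝ) + 1) := by
    have := dist_triangle y w x
    have h2 : dist y w + dist w x < 2 / (3 * ((j : ℝ) + 1)) := by
      rw [dist_comm w x]
      have hsum : 1 / (3 * ((j : ℝ) + 1)) + 1 / (3 * ((j : ℝ) + 1)) = 2 / (3 * ((j : ℝ) + 1)) := by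
        ring
      linarith [hxw, hyw]
    have h3 : 2 / (3 * ((j : ℝ) + 1)) ≤ 1 / ((j : ℝ) + 1) := by
      rw [div_le_div_iff₀ (by positivity) hj]
      ring_nf
      linarith
    linarith
  have happ := happrox y hdxy
  -- ‖D₀ (x - y)‖ ≤ ‖F x - F y‖ + 2 ρ * dist x y
  have hkey : ‖D₀ (x - y)‖ ≤ ‖F x - F y‖ + 2 * (ρ : ℝ) * dist x y := by
    have hDxy : ‖(D - D₀) (x - y)‖ ≤ (ρ : ℝ) * ‖x - y‖ := by
      calc ‖(D - D₀) (x - y)‖ ≤ ‖D - D₀‖ * ‖x - y‖ := (D - D₀).le_opNorm _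
        _ ≤ (ρ : ℝ) * ‖x - y‖ := by
            apply mul_le_mul_of_nonneg_right hDD₀ (norm_nonneg _)
    have hid : D₀ (x - y) = (F x - F y) + (F y - F x - D (y - x)) - (D - D₀) (x - y) := by
      have h1 : D (y - x) = - D (x - y) := by rw [← map_neg]; congr 1; abel
      rw [ContinuousLinearMap.sub_apply, h1]
      abel
    calc ‖D₀ (x - y)‖ ≤ ‖(F x - F y) + (F y - F x - D (y - x))‖ + ‖(D - D₀) (x - y)‖ := by
          rw [hid]; exact norm_sub_le _ _
      _ ≤ ‖F x - F y‖ + ‖F y - F x - D (y - x)‖ + ‖(D - D₀) (x - y)‖ := by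
          have := norm_add_le (F x - F y) (F y - F x - D (y - x))
          linarith
      _ ≤ ‖F x - F y‖ + (ρ : ℝ) * dist y x + (ρ : ℝ) * ‖x - y‖ := by
          linarith [happ, hDxy]
      _ = ‖F x - F y‖ + 2 * (ρ : ℝ) * dist x y := by
          rw [dist_comm y x, dist_eq_norm]
          ring
  have hlow' := hlow (x - y)
  have hρR : (0 : ℝ) < (ρ : ℝ) := by exact_mod_cast hρ
  have hnorm : dist x y = ‖x - y‖ := dist_eq_norm x y
  have hQ : ‖Q₀ (x - y)‖ = dist (Q₀ x) (Q₀ y) := by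
    rw [dist_eq_norm, ← map_sub]
  have hprod : dist (F x, Q₀ x) (F y, Q₀ y) = max (dist (F x) (F y)) (dist (Q₀ x) (Q₀ y)) :=
    Prod.dist_eq
  rw [hprod]
  rcases le_total ‖D₀ (x - y)‖ ‖Q₀ (x - y)‖ with hc | hc
  · -- max is ≥ ‖Q₀ (x-y)‖ ≥ 3ρ‖x-y‖
    have : 3 * (ρ : ℝ) * ‖x - y‖ ≤ ‖Q₀ (x - y)‖ := le_trans hlow' (by rw [max_eq_right hc])
    calc (ρ : ℝ) * dist x y ≤ 3 * (ρ : ℝ) * ‖x - y‖ := by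
          rw [hnorm]; nlinarith [norm_nonneg (x - y)]
      _ ≤ dist (Q₀ x) (Q₀ y) := by rw [← hQ]; exact this
      _ ≤ max (dist (F x) (F y)) (dist (Q₀ x) (Q₀ y)) := le_max_right _ _
  · have h3 : 3 * (ρ : ℝ) * ‖x - y‖ ≤ ‖D₀ (x - y)‖ := le_trans hlow' (by rw [max_eq_left hc])
    have hFxy : (ρ : ℝ) * dist x y ≤ ‖F x - F y‖ := by
      rw [hnorm]
      nlinarith [norm_nonneg (x - y), hkey, hnorm]
    calc (ρ : ℝ) * dist x y ≤ ‖F x - F y‖ := hFxy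
      _ = dist (F x) (F y) := (dist_eq_norm _ _).symm
      _ ≤ max (dist (F x) (F y)) (dist (Q₀ x) (Q₀ y)) := le_max_left _ _

lemma ballVol_ne_top (k : ℕ) : ballVol k ≠ ⊤ := measure_ball_lt_top.ne

set_option maxHeartbeats 1000000 in
theorem piece_null (n m : ℕ) (hn : 1 ≤ n)
    (F : EuclideanSpace ℝ (Fin (n + m)) → EuclideanSpace ℝ (Fin n))
    (E : Set (EuclideanSpace ℝ (Fin (n + m))))
    (h0 : mapContent n m (unitCube (n + m)) F E = 0)
    (D₀ : EuclideanSpace ℝ (Fin (n + m)) →L[ℝ] EuclideanSpace ℝ (Fin n))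
    (Q₀ : EuclideanSpace ℝ (Fin (n + m)) →L[ℝ] EuclideanSpace ℝ (Fin m))
    (ρ : ℚ) (j : ℕ) (w : EuclideanSpace ℝ (Fin (n + m))) :
    volume (Piece n m F E D₀ Q₀ ρ j w) = 0 := by
  classical
  set P := Piece n m F E D₀ Q₀ ρ j w with hPdef
  rcases eq_empty_or_nonempty P with hP | ⟨x₀, hx₀⟩
  · simp [hP]
  have hρ : 0 < ρ := hx₀.2.1
  have hρR : (0 : ℝ) < (ρ : ℝ) := by exact_mod_cast hρ
  set c : ℝ≥0 := Real.toNNReal (ρ : ℝ) with hcdef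
  have hceq : (c : ℝ) = (ρ : ℝ) := Real.coe_toNNReal _ hρR.le
  have hc : 0 < c := by rw [← NNReal.coe_pos, hceq]; exact hρR
  -- Haar measure comparisons
  have hfrX : finrank ℝ (EuclideanSpace ℝ (Fin (n + m))) = n + m := finrank_euclideanSpace_fin
  have hfrW : finrank ℝ (EuclideanSpace ℝ (Fin n) × EuclideanSpace ℝ (Fin m)) = n + m := by
    rw [Module.finrank_prod, finrank_euclideanSpace_fin, finrank_euclideanSpace_fin]
  set c₁ := Measure.addHaarScalarFactor (volume : Measure (EuclideanSpace ℝ (Fin (n + m))))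
    μH[finrank ℝ (EuclideanSpace ℝ (Fin (n + m)))] with hc₁
  have hcmpX : ∀ s : Set (EuclideanSpace ℝ (Fin (n + m))),
      volume s ≤ (c₁ : ℝ≥0∞) * μH[((n + m : ℕ) : ℝ)] s := by
    intro s
    have e1 := Measure.isAddLeftInvariant_eq_smul
      (volume : Measure (EuclideanSpace ℝ (Fin (n + m))))
      μH[finrank ℝ (EuclideanSpace ℝ (Fin (n + m)))]
    have e1' : (μH[((finrank ℝ (EuclideanSpace ℝ (Fin (n + m)))) : ℝ)] :
        Measure (EuclideanSpace ℝ (Fin (n + m)))) s = μH[((n + m : ℕ) : ℝ)] s := by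
      rw [hfrX]
    refine le_of_eq ?_
    calc volume s = (c₁ • (μH[((finrank ℝ (EuclideanSpace ℝ (Fin (n + m)))) : ℝ)] :
            Measure (EuclideanSpace ℝ (Fin (n + m))))) s := by rw [e1]
      _ = (c₁ : ℝ≥0∞) * (μH[((finrank ℝ (EuclideanSpace ℝ (Fin (n + m)))) : ℝ)] :
            Measure (EuclideanSpace ℝ (Fin (n + m)))) s := by rw [Measure.smul_apply, ENNReal.smul_def, smul_eq_mul]
      _ = (c₁ : ℝ≥0∞) * μH[((n + m : ℕ) : ℝ)] s := by rw [e1']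
  haveI hWHaar : ((volume : Measure (EuclideanSpace ℝ (Fin n))).prod
      (volume : Measure (EuclideanSpace ℝ (Fin m)))).IsAddHaarMeasure :=
    Measure.prod.instIsAddHaarMeasure _ _
  set c₂ := Measure.addHaarScalarFactor
    (μH[finrank ℝ (EuclideanSpace ℝ (Fin n) × EuclideanSpace ℝ (Fin m))] :
      Measure (EuclideanSpace ℝ (Fin n) × EuclideanSpace ℝ (Fin m)))
    ((volume : Measure (EuclideanSpace ℝ (Fin n))).prod volume) with hc₂
  have hcmpW : ∀ s : Set (EuclideanSpace ℝ (Fin n) × EuclideanSpace ℝ (Fin m)),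
      μH[((n + m : ℕ) : ℝ)] s ≤
        (c₂ : ℝ≥0∞) * ((volume : Measure (EuclideanSpace ℝ (Fin n))).prod volume) s := by
    intro s
    have e2 := Measure.isAddLeftInvariant_eq_smul
      (μH[finrank ℝ (EuclideanSpace ℝ (Fin n) × EuclideanSpace ℝ (Fin m))] :
        Measure (EuclideanSpace ℝ (Fin n) × EuclideanSpace ℝ (Fin m)))
      ((volume : Measure (EuclideanSpace ℝ (Fin n))).prod volume)
    have e2' : (μH[((n + m : ℕ) : ℝ)] :
        Measure (EuclideanSpace ℝ (Fin n) × EuclideanSpace ℝ (Fin m))) s =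
        μH[((finrank ℝ (EuclideanSpace ℝ (Fin n) × EuclideanSpace ℝ (Fin m))) : ℝ)] s := by
      rw [hfrW]
    refine le_of_eq ?_
    calc (μH[((n + m : ℕ) : ℝ)] :
          Measure (EuclideanSpace ℝ (Fin n) × EuclideanSpace ℝ (Fin m))) s =
        (μH[((finrank ℝ (EuclideanSpace ℝ (Fin n) × EuclideanSpace ℝ (Fin m))) : ℝ)] :
          Measure (EuclideanSpace ℝ (Fin n) × EuclideanSpace ℝ (Fin m))) s := e2'
      _ = (c₂ • ((volume : Measure (EuclideanSpace ℝ (Fin n))).prod volume)) s := by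
          rw [e2]
      _ = (c₂ : ℝ≥0∞) * ((volume : Measure (EuclideanSpace ℝ (Fin n))).prod volume) s := by
          rw [Measure.smul_apply, ENNReal.smul_def, smul_eq_mul]
  set Cst : ℝ≥0∞ := (c₁ : ℝ≥0∞) * ((c⁻¹ : ℝ≥0) : ℝ≥0∞) ^ (n + m) * (c₂ : ℝ≥0∞) * 2 ^ n *
    (ballVol m * ((‖Q₀‖₊ : ℝ≥0∞)) ^ m) with hCst
  have hCstne : Cst ≠ ⊤ := by
    rw [hCst]
    refine ENNReal.mul_ne_top (ENNReal.mul_ne_top (ENNReal.mul_ne_top (ENNReal.mul_ne_top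
      ENNReal.coe_ne_top (ENNReal.pow_ne_top ENNReal.coe_ne_top)) ENNReal.coe_ne_top)
      (ENNReal.pow_ne_top (by norm_num))) (ENNReal.mul_ne_top (ballVol_ne_top m)
      (ENNReal.pow_ne_top ENNReal.coe_ne_top))
  set Φ : EuclideanSpace ℝ (Fin (n + m)) → EuclideanSpace ℝ (Fin n) × EuclideanSpace ℝ (Fin m) :=
    fun x => (F x, Q₀ x) with hΦ
  -- The main per-set bound
  have hbound : ∀ A : Set (EuclideanSpace ℝ (Fin (n + m))), A ⊆ unitCube (n + m) →
      volume (P ∩ A) ≤ Cst * (hContent n (F '' A) * EMetric.diam A ^ m) := by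
    intro A hAQ
    set S := P ∩ A with hS
    have hexp : ∀ x ∈ S, ∀ y ∈ S, (c : ℝ) * dist x y ≤ dist (Φ x) (Φ y) := by
      intro x hx y hy
      rw [hceq]
      exact piece_expand hx.1 hy.1
    have hμ : μH[((n + m : ℕ) : ℝ)] S ≤
        ((c⁻¹ : ℝ≥0) : ℝ≥0∞) ^ (n + m) * μH[((n + m : ℕ) : ℝ)] (Φ '' S) :=
      hausdorff_le_of_expand Φ S c hc hexp (n + m)
    have himg : Φ '' S ⊆ (F '' A) ×ˢ (Q₀ '' S) := by
      rintro - ⟨x, hx, rfl⟩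
      exact ⟨mem_image_of_mem F hx.2, mem_image_of_mem _ hx⟩
    have hQdiam : EMetric.diam (Q₀ '' S) ≤ (‖Q₀‖₊ : ℝ≥0∞) * EMetric.diam A :=
      le_trans (Q₀.lipschitz.ediam_image_le S)
        (mul_le_mul_right (EMetric.diam_mono inter_subset_right) _)
    have hvolQ : volume (Q₀ '' S) ≤ ballVol m * ((‖Q₀‖₊ : ℝ≥0∞) * EMetric.diam A) ^ m := by
      refine le_trans (volume_le_ediam_pow m _) ?_
      gcongr
    have hvolF : volume (F '' A) ≤ 2 ^ n * hContent n (F '' A) := volume_le_hContent hn _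
    have hprodvol : ((volume : Measure (EuclideanSpace ℝ (Fin n))).prod volume) (Φ '' S) ≤
        volume (F '' A) * volume (Q₀ '' S) := by
      refine le_trans (measure_mono himg) ?_
      rw [Measure.prod_prod]
    calc volume S ≤ (c₁ : ℝ≥0∞) * μH[((n + m : ℕ) : ℝ)] S := hcmpX S
      _ ≤ (c₁ : ℝ≥0∞) * (((c⁻¹ : ℝ≥0) : ℝ≥0∞) ^ (n + m) * μH[((n + m : ℕ) : ℝ)] (Φ '' S)) :=
          mul_le_mul_right hμ _
      _ ≤ (c₁ : ℝ≥0∞) * (((c⁻¹ : ℝ≥0) : ℝ≥0∞) ^ (n + m) *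
            ((c₂ : ℝ≥0∞) * ((volume : Measure (EuclideanSpace ℝ (Fin n))).prod volume)
              (Φ '' S))) := by
          gcongr
          exact hcmpW _
      _ ≤ (c₁ : ℝ≥0∞) * (((c⁻¹ : ℝ≥0) : ℝ≥0∞) ^ (n + m) *
            ((c₂ : ℝ≥0∞) * ((2 ^ n * hContent n (F '' A)) *
              (ballVol m * ((‖Q₀‖₊ : ℝ≥0∞) * EMetric.diam A) ^ m)))) := by
          gcongr
          exact le_trans hprodvol (mul_le_mul' hvolF hvolQ)
      _ = Cst * (hContent n (F '' A) * EMetric.diam A ^ m) := by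
          rw [hCst, mul_pow]
          ring
  -- conclude via the vanishing mapping content
  have hfinal : ∀ ε : ℝ≥0, 0 < ε → volume P ≤ (ε : ℝ≥0∞) := by
    intro ε hε
    set δ : ℝ≥0∞ := (ε : ℝ≥0∞) / (Cst + 1) with hδdef
    have hδ : 0 < δ := ENNReal.div_pos (by exact_mod_cast hε.ne') (by simp [hCstne])
    have hlt : mapContent n m (unitCube (n + m)) F E < δ := h0 ▸ hδ
    rw [mapContent] at hlt
    obtain ⟨A, hlt⟩ := iInf_lt_iff.mp hlt
    obtain ⟨hcov, hlt⟩ := iInf_lt_iff.mp hlt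
    obtain ⟨hsub, hlt⟩ := iInf_lt_iff.mp hlt
    have hPcov : P ⊆ ⋃ i, (P ∩ A i) := by
      intro x hx
      obtain ⟨i, hi⟩ := mem_iUnion.mp (hcov hx.1)
      exact mem_iUnion.mpr ⟨i, hx, hi⟩
    calc volume P ≤ ∑' i, volume (P ∩ A i) :=
          le_trans (measure_mono hPcov) (measure_iUnion_le _)
      _ ≤ ∑' i, Cst * (hContent n (F '' (A i)) * EMetric.diam (A i) ^ m) :=
          ENNReal.tsum_le_tsum fun i => hbound (A i) (hsub i)
      _ = Cst * ∑' i, hContent n (F '' (A i)) * EMetric.diam (A i) ^ m := ENNReal.tsum_mul_left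
      _ ≤ Cst * δ := mul_le_mul_right hlt.le _
      _ ≤ (Cst + 1) * ((ε : ℝ≥0∞) / (Cst + 1)) := by
          rw [hδdef]; gcongr; exact le_self_add
      _ ≤ (ε : ℝ≥0∞) := ENNReal.mul_div_le
  refine le_antisymm ?_ zero_le
  refine ENNReal.le_of_forall_pos_le_add fun ε hε _ => ?_
  simpa using hfinal ε hε

end Stmt12

open Stmt12 Module in
set_option maxHeartbeats 1000000 in
/-- If `F : [0,1]^{n+m} → ℝⁿ` is Lipschitz, `E` measurable with `Ĥ^{n,m}_∞(F,E) = 0`,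
then `rank DF(x) ≤ n−1` for almost all `x ∈ E`. -/
theorem stmt_12 (n m : ℕ) (hn : 1 ≤ n) (K : NNReal)
    (F : EuclideanSpace ℝ (Fin (n + m)) → EuclideanSpace ℝ (Fin n))
    (hF : LipschitzOnWith K F (unitCube (n + m)))
    (E : Set (EuclideanSpace ℝ (Fin (n + m)))) (hE : MeasurableSet E)
    (hEQ : E ⊆ unitCube (n + m))
    (h0 : mapContent n m (unitCube (n + m)) F E = 0) :
    ∀ᵐ x ∂(volume : Measure (EuclideanSpace ℝ (Fin (n + m)))), x ∈ E →
      ∀ D : EuclideanSpace ℝ (Fin (n + m)) →L[ℝ] EuclideanSpace ℝ (Fin n),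
        HasFDerivAt F D x → Module.finrank ℝ (LinearMap.range D.toLinearMap) ≤ n - 1 := by
  classical
  obtain ⟨SD, hSDc, hSDd⟩ := TopologicalSpace.exists_countable_dense
    (EuclideanSpace ℝ (Fin (n + m)) →L[ℝ] EuclideanSpace ℝ (Fin n))
  obtain ⟨SQ, hSQc, hSQd⟩ := TopologicalSpace.exists_countable_dense
    (EuclideanSpace ℝ (Fin (n + m)) →L[ℝ] EuclideanSpace ℝ (Fin m))
  obtain ⟨SW, hSWc, hSWd⟩ := TopologicalSpace.exists_countable_dense
    (EuclideanSpace ℝ (Fin (n + m)))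
  set I := SD ×ˢ SQ ×ˢ (univ : Set ℚ) ×ˢ (univ : Set ℕ) ×ˢ SW with hI
  have hIc : I.Countable :=
    hSDc.prod (hSQc.prod (countable_univ.prod (countable_univ.prod hSWc)))
  have hU0 : volume (⋃ p ∈ I,
      Piece n m F E p.1 p.2.1 p.2.2.1 p.2.2.2.1 p.2.2.2.2) = 0 :=
    (measure_biUnion_null_iff hIc).2 fun p _ => piece_null n m hn F E h0 _ _ _ _ _
  rw [MeasureTheory.ae_iff]
  refine measure_mono_null ?_ hU0
  intro x hx
  simp only [mem_setOf_eq] at hx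
  push_neg at hx
  obtain ⟨hxE, D, hD, hrk⟩ := hx
  -- the derivative is surjective
  have hle : finrank ℝ (LinearMap.range D.toLinearMap) ≤ n :=
    le_trans (Submodule.finrank_le _) (le_of_eq finrank_euclideanSpace_fin)
  have heq : finrank ℝ (LinearMap.range D.toLinearMap) = n := by omega
  -- the kernel has dimension m
  have hker : finrank ℝ (LinearMap.ker D.toLinearMap) = m := by
    have h1 : finrank ℝ (LinearMap.range D.toLinearMap) +
        finrank ℝ (LinearMap.ker D.toLinearMap) = n + m := by
      rw [LinearMap.finrank_range_add_finrank_ker]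
      exact finrank_euclideanSpace_fin
    omega
  have hQex : ∃ Q : EuclideanSpace ℝ (Fin (n + m)) →L[ℝ] EuclideanSpace ℝ (Fin m),
      ∃ c₀ : ℝ, 0 < c₀ ∧ ∀ v, c₀ * ‖v‖ ≤ max ‖D v‖ ‖Q v‖ := by
    set Kk := LinearMap.ker D.toLinearMap with hKk
    have e : Kk ≃ₗ[ℝ] EuclideanSpace ℝ (Fin m) := by
      refine LinearEquiv.ofFinrankEq _ _ ?_
      rw [hker, finrank_euclideanSpace_fin]
    set Q : EuclideanSpace ℝ (Fin (n + m)) →L[ℝ] EuclideanSpace ℝ (Fin m) :=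
      LinearMap.toContinuousLinearMap
        (e.toLinearMap ∘ₗ ((Submodule.orthogonalProjectionOnto Kk : _ →L[ℝ] Kk) : _ →ₗ[ℝ] Kk)) with hQ
    have hQval : ∀ v, Q v = e (Submodule.orthogonalProjectionOnto Kk v) := fun v => rfl
    set T := D.prod Q with hT
    have hTval : ∀ v, T v = (D v, Q v) := fun v => rfl
    have hTinj : Function.Injective T.toLinearMap := by
      rw [← LinearMap.ker_eq_bot]
      rw [LinearMap.ker_eq_bot']
      intro v hv
      have hv' : T v = 0 := hv
      rw [hTval] at hv'
      have hDv : D v = 0 := congrArg Prod.fst hv'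
      have hQv : Q v = 0 := congrArg Prod.snd hv'
      have hvK : v ∈ Kk := LinearMap.mem_ker.mpr hDv
      rw [hQval] at hQv
      have hproj : Submodule.orthogonalProjectionOnto Kk v = ⟨v, hvK⟩ :=
        Submodule.orthogonalProjectionOnto_mem_subspace_eq_self ⟨v, hvK⟩
      rw [hproj] at hQv
      have : (⟨v, hvK⟩ : Kk) = 0 := e.map_eq_zero_iff.mp hQv
      exact congrArg Subtype.val this
    have hfrXW : finrank ℝ (EuclideanSpace ℝ (Fin (n + m))) =
        finrank ℝ (EuclideanSpace ℝ (Fin n) × EuclideanSpace ℝ (Fin m)) := by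
      rw [finrank_euclideanSpace_fin, Module.finrank_prod, finrank_euclideanSpace_fin,
        finrank_euclideanSpace_fin]
    have hTsurj : Function.Surjective T.toLinearMap :=
      (LinearMap.injective_iff_surjective_of_finrank_eq_finrank hfrXW).mp hTinj
    set eT := (LinearEquiv.ofBijective T.toLinearMap
      ⟨hTinj, hTsurj⟩).toContinuousLinearEquiv with heT
    have heTval : ∀ v, eT v = T v := fun v => rfl
    obtain ⟨K₀, hanti⟩ : ∃ K₀ : ℝ≥0, AntilipschitzWith K₀ eT := ⟨_, eT.antilipschitz⟩
    have hK₀1 : (0 : ℝ) < (K₀ : ℝ) + 1 := by positivity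
    refine ⟨Q, ((K₀ : ℝ) + 1)⁻¹, by positivity, fun v => ?_⟩
    have h1 : dist v 0 ≤ (K₀ : ℝ) * dist (eT v) (eT 0) := hanti.le_mul_dist v 0
    rw [map_zero, dist_zero_right, dist_zero_right, heTval] at h1
    have h2 : ‖T v‖ = max ‖D v‖ ‖Q v‖ := by rw [hTval]; exact Prod.norm_def _
    rw [h2] at h1
    have hmax : 0 ≤ max ‖D v‖ ‖Q v‖ := le_max_of_le_left (norm_nonneg _)
    rw [inv_mul_le_iff₀ hK₀1]
    nlinarith
  obtain ⟨Q, c₀, hc₀pos, hlowDQ⟩ := hQex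
  obtain ⟨ρ, hρ1, hρ2⟩ := exists_rat_btwn (div_pos hc₀pos (by norm_num : (0:ℝ) < 8))
  have hρpos : 0 < ρ := by exact_mod_cast hρ1
  have hρR : (0 : ℝ) < (ρ : ℝ) := by exact_mod_cast hρ1
  obtain ⟨D₀, hD₀S, hD₀⟩ := hSDd.exists_dist_lt D hρR
  obtain ⟨Q₀, hQ₀S, hQ₀⟩ := hSQd.exists_dist_lt Q hρR
  have hlow₀ : ∀ v, 3 * (ρ : ℝ) * ‖v‖ ≤ max ‖D₀ v‖ ‖Q₀ v‖ := by
    intro v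
    have hDv : ‖D v - D₀ v‖ ≤ (ρ : ℝ) * ‖v‖ := by
      calc ‖D v - D₀ v‖ = ‖(D - D₀) v‖ := by rw [ContinuousLinearMap.sub_apply]
        _ ≤ ‖D - D₀‖ * ‖v‖ := (D - D₀).le_opNorm v
        _ ≤ (ρ : ℝ) * ‖v‖ := by
            apply mul_le_mul_of_nonneg_right _ (norm_nonneg v)
            rw [← dist_eq_norm]
            exact hD₀.le
    have hQv : ‖Q v - Q₀ v‖ ≤ (ρ : ℝ) * ‖v‖ := by
      calc ‖Q v - Q₀ v‖ = ‖(Q - Q₀) v‖ := by rw [ContinuousLinearMap.sub_apply]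
        _ ≤ ‖Q - Q₀‖ * ‖v‖ := (Q - Q₀).le_opNorm v
        _ ≤ (ρ : ℝ) * ‖v‖ := by
            apply mul_le_mul_of_nonneg_right _ (norm_nonneg v)
            rw [← dist_eq_norm]
            exact hQ₀.le
    have h8 : 8 * (ρ : ℝ) ≤ c₀ := by linarith
    have hlow := hlowDQ v
    have hnv : 0 ≤ ‖v‖ := norm_nonneg v
    have hD₀v : ‖D v‖ - (ρ : ℝ) * ‖v‖ ≤ ‖D₀ v‖ := by
      have := norm_sub_norm_le (D v) (D₀ v)
      linarith
    have hQ₀v : ‖Q v‖ - (ρ : ℝ) * ‖v‖ ≤ ‖Q₀ v‖ := by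
      have := norm_sub_norm_le (Q v) (Q₀ v)
      linarith
    have hprod : (0:ℝ) ≤ (c₀ - 8 * (ρ:ℝ)) * ‖v‖ :=
      mul_nonneg (by linarith) hnv
    rcases le_total ‖D v‖ ‖Q v‖ with hcase | hcase
    · rw [max_eq_right hcase] at hlow
      refine le_trans ?_ (le_max_right ‖D₀ v‖ ‖Q₀ v‖)
      nlinarith [hprod]
    · rw [max_eq_left hcase] at hlow
      refine le_trans ?_ (le_max_left ‖D₀ v‖ ‖Q₀ v‖)
      nlinarith [hprod]
  -- choose the scale
  have hlit := hD.isLittleO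
  rw [Asymptotics.isLittleO_iff] at hlit
  have hev := hlit hρR
  rw [Metric.eventually_nhds_iff] at hev
  obtain ⟨δ, hδ, hball⟩ := hev
  obtain ⟨j, hj⟩ := exists_nat_one_div_lt hδ
  obtain ⟨w, hwS, hw⟩ := hSWd.exists_dist_lt x
    (show (0 : ℝ) < 1 / (3 * ((j : ℝ) + 1)) by positivity)
  have hmem : x ∈ Piece n m F E D₀ Q₀ ρ j w := by
    refine ⟨hxE, hρpos, hlow₀, hw, D, hD, ?_, ?_⟩
    · rw [← dist_eq_norm]; exact hD₀.le
    · intro y hy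
      have hylt : dist y x < δ := lt_of_le_of_lt hy hj
      have := hball hylt
      simpa [dist_eq_norm] using this
  have hpI : (D₀, Q₀, ρ, j, w) ∈ I := ⟨hD₀S, hQ₀S, mem_univ _, mem_univ _, hwS⟩
  exact mem_biUnion hpI hmem
end

section
/- Let F : [0,1]^{n+m} → ℝⁿ be Lipschitz, E measurable with Ĥ^{n,m}_∞(F,E) = 0 and m ≥ 1. Then for H^n-almost every y ∈ ℝⁿ, the m-dimensional Hausdorff measure of F⁻¹(y) ∩ E is zero. -/
open Set MeasureTheory

lemma volume_le_hContent (n : ℕ) (hn : 1 ≤ n) (S : Set (EuclideanSpace ℝ (Fin n))) :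
    volume S ≤ 2 ^ n * hContent n S := by
  set ω : ENNReal := volume (Metric.ball (0 : EuclideanSpace ℝ (Fin n)) 1) with hω
  have hω0 : ω ≠ 0 := (Metric.measure_ball_pos _ _ one_pos).ne'
  have hωt : ω ≠ ⊤ := measure_ball_lt_top.ne
  have h2n0 : (2 : ENNReal) ^ n ≠ 0 := by positivity
  have h2nt : (2 : ENNReal) ^ n ≠ ⊤ := by simp
  have h : volume S / 2 ^ n ≤ hContent n S := by
    refine le_iInf₂ fun A hA => ?_
    have key : ∀ i, volume (A i) ≤ 2 ^ n * (ω / 2 ^ n * (EMetric.diam (A i)) ^ n) := by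
      intro i
      rcases eq_empty_or_nonempty (A i) with h | ⟨x, hx⟩
      · simp [h]
      rcases eq_or_ne (EMetric.diam (A i)) ⊤ with hd | hd
      · rw [hd, ENNReal.top_pow (by omega)]
        rw [ENNReal.mul_top (by simp [ENNReal.div_eq_zero_iff, hω0, h2nt]),
          ENNReal.mul_top h2n0]
        exact le_top
      · have hsub : A i ⊆ Metric.closedBall x (EMetric.diam (A i)).toReal := by
          intro y hy
          have := EMetric.edist_le_diam_of_mem hy hx
          rw [Metric.mem_closedBall, dist_edist]
          exact ENNReal.toReal_mono hd this
        calc volume (A i) ≤ volume (Metric.closedBall x (EMetric.diam (A i)).toReal) :=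
              measure_mono hsub
          _ = ENNReal.ofReal ((EMetric.diam (A i)).toReal ^
                Module.finrank ℝ (EuclideanSpace ℝ (Fin n))) * ω :=
              Measure.addHaar_closedBall _ _ ENNReal.toReal_nonneg
          _ ≤ 2 ^ n * (ω / 2 ^ n * (EMetric.diam (A i)) ^ n) := by
              rw [finrank_euclideanSpace_fin, ENNReal.ofReal_pow ENNReal.toReal_nonneg,
                ENNReal.ofReal_toReal hd, ← mul_assoc,
                ENNReal.mul_div_cancel h2n0 h2nt, mul_comm]
    calc volume S / 2 ^ n ≤ (∑' i, volume (A i)) / 2 ^ n := by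
          gcongr
          exact (measure_mono hA).trans (measure_iUnion_le A)
      _ ≤ (2 ^ n * ∑' i, ω / 2 ^ n * (EMetric.diam (A i)) ^ n) / 2 ^ n := by
          gcongr
          rw [← ENNReal.tsum_mul_left]
          exact ENNReal.tsum_le_tsum key
      _ = ∑' i, ω / 2 ^ n * (EMetric.diam (A i)) ^ n := by
          rw [mul_comm, mul_div_assoc, ENNReal.div_self h2n0 h2nt, mul_one]
  calc volume S = 2 ^ n * (volume S / 2 ^ n) := (ENNReal.mul_div_cancel h2n0 h2nt).symm
    _ ≤ 2 ^ n * hContent n S := by gcongr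

/-- If `F : [0,1]^{n+m} → ℝⁿ` is Lipschitz, `m ≥ 1`, and `Ĥ^{n,m}_∞(F,E) = 0`, then for
`H^n`-a.e. `y ∈ ℝⁿ` the `m`-dimensional Hausdorff measure of `F⁻¹(y) ∩ E` vanishes. -/
theorem stmt_13 (n m : ℕ) (hn : 1 ≤ n) (hm : 1 ≤ m) (K : NNReal)
    (F : EuclideanSpace ℝ (Fin (n + m)) → EuclideanSpace ℝ (Fin n))
    (hF : LipschitzOnWith K F (unitCube (n + m)))
    (E : Set (EuclideanSpace ℝ (Fin (n + m)))) (hE : MeasurableSet E)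
    (hEQ : E ⊆ unitCube (n + m))
    (h0 : mapContent n m (unitCube (n + m)) F E = 0) :
    ∀ᵐ y ∂(volume : Measure (EuclideanSpace ℝ (Fin n))),
      μH[(m : ℝ)] (F ⁻¹' {y} ∩ E) = 0 := by
  classical
  -- Step 1: choose covers
  have hcov : ∀ k : ℕ, ∃ A : ℕ → Set (EuclideanSpace ℝ (Fin (n + m))),
      (E ⊆ ⋃ i, A i) ∧
      ∑' i, hContent n (F '' A i) * (EMetric.diam (A i)) ^ m ≤ 2⁻¹ ^ k := by
    intro k
    have hlt : mapContent n m (unitCube (n + m)) F E < 2⁻¹ ^ k := by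
      rw [h0]
      exact ENNReal.pow_pos (by norm_num) k
    rw [mapContent] at hlt
    simp only [iInf_lt_iff] at hlt
    obtain ⟨A, h1, h2, h3⟩ := hlt
    exact ⟨A, h1, h3.le⟩
  choose A hAcov hAsum using hcov
  -- hulls and the auxiliary functions
  set Z : ℕ → ℕ → Set (EuclideanSpace ℝ (Fin n)) :=
    fun k i => toMeasurable volume (F '' A k i) with hZ
  set g : ℕ → EuclideanSpace ℝ (Fin n) → ENNReal :=
    fun k y => ∑' i, (Z k i).indicator (fun _ => EMetric.diam (A k i) ^ m) y with hg
  have hgmeas : ∀ k, Measurable (g k) := by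
    intro k
    exact Measurable.ennreal_tsum fun i =>
      measurable_const.indicator (measurableSet_toMeasurable _ _)
  have hgint : ∀ k, ∫⁻ y, g k y ≤ 2 ^ n * 2⁻¹ ^ k := by
    intro k
    calc ∫⁻ y, g k y
        = ∑' i, ∫⁻ y, (Z k i).indicator (fun _ => EMetric.diam (A k i) ^ m) y :=
          lintegral_tsum fun i =>
            (measurable_const.indicator (measurableSet_toMeasurable _ _)).aemeasurable
      _ = ∑' i, EMetric.diam (A k i) ^ m * volume (Z k i) := by
          congr 1; funext i; exact lintegral_indicator_const (measurableSet_toMeasurable _ _) _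
      _ ≤ ∑' i, EMetric.diam (A k i) ^ m * (2 ^ n * hContent n (F '' A k i)) := by
          refine ENNReal.tsum_le_tsum fun i => ?_
          gcongr
          rw [hZ]
          simp only []
          rw [measure_toMeasurable]
          exact volume_le_hContent n hn _
      _ = 2 ^ n * ∑' i, hContent n (F '' A k i) * EMetric.diam (A k i) ^ m := by
          rw [← ENNReal.tsum_mul_left]
          congr 1; funext i; ring
      _ ≤ 2 ^ n * 2⁻¹ ^ k := by gcongr; exact hAsum k
  -- the total function is a.e. finite
  have htot : ∫⁻ y, ∑' k, g k y ≠ ⊤ := by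
    rw [lintegral_tsum fun k => (hgmeas k).aemeasurable]
    refine ne_top_of_le_ne_top ?_ (ENNReal.tsum_le_tsum hgint)
    rw [ENNReal.tsum_mul_left, ENNReal.tsum_geometric, ENNReal.one_sub_inv_two,
      inv_inv]
    exact ENNReal.mul_ne_top (by simp) (by simp)
  have hae : ∀ᵐ y ∂(volume : Measure (EuclideanSpace ℝ (Fin n))),
      (∑' k, g k y) < ⊤ :=
    ae_lt_top (Measurable.ennreal_tsum hgmeas) htot
  filter_upwards [hae] with y hy
  -- Step 2: for such y the Hausdorff measure vanishes
  have hsmall : ∀ δ : ENNReal, δ ≠ 0 → ∃ k, g k y < δ := by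
    intro δ hδ
    by_contra hcon
    push_neg at hcon
    have : (⊤ : ENNReal) ≤ ∑' k, g k y := by
      calc (⊤ : ENNReal) = ∑' _ : ℕ, δ := (ENNReal.tsum_const_eq_top_of_ne_zero hδ).symm
        _ ≤ ∑' k, g k y := ENNReal.tsum_le_tsum hcon
    exact absurd (lt_of_le_of_lt this hy) (lt_irrefl _)
  refine le_antisymm ?_ zero_le
  rw [MeasureTheory.Measure.hausdorffMeasure_apply]
  refine iSup₂_le fun r hr => ?_
  refine ENNReal.le_of_forall_pos_le_add fun ε hε _ => ?_
  rw [zero_add]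
  set δ := min (ε : ENNReal) (r ^ m) with hδdef
  have hδ0 : δ ≠ 0 := by
    refine (lt_min ?_ ?_).ne'
    · exact_mod_cast hε
    · exact ENNReal.pow_pos hr m
  obtain ⟨k, hk⟩ := hsmall δ hδ0
  set t : ℕ → Set (EuclideanSpace ℝ (Fin (n + m))) :=
    fun i => if y ∈ Z k i then A k i else ∅ with ht
  have hterm : ∀ i, y ∈ Z k i → EMetric.diam (A k i) ^ m ≤ g k y := by
    intro i hyi
    have := ENNReal.le_tsum (f := fun i => (Z k i).indicator
      (fun _ => EMetric.diam (A k i) ^ m) y) i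
    rwa [indicator_of_mem hyi] at this
  have hcovt : F ⁻¹' {y} ∩ E ⊆ ⋃ i, t i := by
    rintro x ⟨hxy, hxE⟩
    obtain ⟨i, hi⟩ := mem_iUnion.mp (hAcov k hxE)
    have hyZ : y ∈ Z k i := by
      refine subset_toMeasurable _ _ ?_
      exact ⟨x, hi, by simpa using hxy⟩
    exact mem_iUnion.mpr ⟨i, by simp [ht, hyZ, hi]⟩
  have hdiamt : ∀ i, EMetric.diam (t i) ≤ r := by
    intro i
    rw [ht]
    by_cases hyi : y ∈ Z k i
    · simp only [if_pos hyi]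
      by_contra hgt
      push_neg at hgt
      have h1 : r ^ m < EMetric.diam (A k i) ^ m :=
        ENNReal.pow_lt_pow_left (Nat.one_le_iff_ne_zero.mp hm) hgt
      have h2 : EMetric.diam (A k i) ^ m ≤ δ := (hterm i hyi).trans hk.le
      exact absurd ((h1.trans_le h2).trans_le (min_le_right _ _)) (lt_irrefl _)
    · simp only [if_neg hyi]; exact (Metric.ediam_empty).le.trans zero_le
  refine le_trans (iInf₂_le_of_le t hcovt (iInf_le_of_le hdiamt le_rfl)) ?_
  have hsum : ∑' i, (⨆ _ : (t i).Nonempty, EMetric.diam (t i) ^ (m : ℝ)) ≤ g k y := by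
    refine ENNReal.tsum_le_tsum fun i => ?_
    by_cases hyi : y ∈ Z k i
    · rw [indicator_of_mem hyi]
      refine iSup_le fun _ => ?_
      rw [ht]
      simp only [if_pos hyi]
      exact le_of_eq (ENNReal.rpow_natCast _ m)
    · rw [indicator_of_notMem hyi]
      simp [ht, hyi]
  exact hsum.trans (hk.le.trans (min_le_left _ _))
end
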